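/- arXiv:1510.03552 — 5 statements merged into one kernel-verified Lean document; each statement's English description precedes it below -/
import Mathlib

section
/- Let d>0, α≥0, T>0, h1<h2, and let β,γ:ℝ→ℝ be continuous T-periodic functions with β(t)>0 and γ(t)>0 for all t. Set L=h2−h1 and μ*=((1/T)∫_0^T β(t)dt)/(d(π/L)²+α²/(4d)+(1/T)∫_0^T γ(t)dt). Define u(x,t)=exp(∫_0^t(−γ(s)−d(π/L)²−α²/(4d)+β(s)/μ*)ds)·e^{αx/(2d)}·cos((π/L)(x−(h1+h2)/2)). Then μ*>0 and u satisfies: (a) u_t(x,t)−d·u_xx(x,t)+α·u_x(x,t)=−γ(t)u(x,t)+(β(t)/μ*)u(x,t) for all x∈(h1,h2) and t∈ℝ; (b) u(h1,t)=u(h2,t)=0 for all t; (c) u(x,t+T)=u(x,t) for all x,t (T-periodicity); (d) u(x,t)>0 for all x∈(h1,h2) and t∈ℝ. In other words, u is a positive T-periodic solution of the periodic-parabolic eigenvalue problem φ_t−dφ_xx+αφ_x=−γ(t)φ+(β(t)/μ0)φ on (h1,h2) with Dirichlet boundary conditions, with eigenvalue parameter μ0=μ*. -/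
noncomputable def pX (u : ℝ → ℝ → ℝ) (x t : ℝ) : ℝ := deriv (fun y => u y t) x
noncomputable def pXX (u : ℝ → ℝ → ℝ) (x t : ℝ) : ℝ := deriv (fun y => pX u y t) x
noncomputable def pT (u : ℝ → ℝ → ℝ) (x t : ℝ) : ℝ := deriv (fun s => u x s) t

set_option maxHeartbeats 2000000

/-- **Theorem 3.2(i), explicit eigenfunction.** In the spatially homogeneous time-periodic
case, the explicit function
`u(x,t) = exp(∫₀ᵗ(−γ−d(π/L)²−α²/(4d)+β/μ*)) · e^{αx/(2d)} · cos((π/L)(x−(h1+h2)/2))`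
is a positive T-periodic solution of the periodic-parabolic eigenvalue problem with
eigenvalue parameter `μ* = ((1/T)∫₀ᵀβ)/(d(π/L)² + α²/(4d) + (1/T)∫₀ᵀγ)`. -/
theorem explicit_periodic_eigenfunction
    (d α T h1 h2 : ℝ) (β γ : ℝ → ℝ)
    (hd : 0 < d) (hα : 0 ≤ α) (hT : 0 < T) (hh : h1 < h2)
    (hβc : Continuous β) (hγc : Continuous γ)
    (hβper : ∀ t, β (t + T) = β t) (hγper : ∀ t, γ (t + T) = γ t)
    (hβpos : ∀ t, 0 < β t) (hγpos : ∀ t, 0 < γ t)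
    (L μstar : ℝ) (hL : L = h2 - h1)
    (hμ : μstar = ((1 / T) * ∫ t in (0:ℝ)..T, β t) /
      (d * (Real.pi / L) ^ 2 + α ^ 2 / (4 * d) + (1 / T) * ∫ t in (0:ℝ)..T, γ t))
    (u : ℝ → ℝ → ℝ)
    (hu : ∀ x t, u x t =
      Real.exp (∫ s in (0:ℝ)..t,
          (-γ s - d * (Real.pi / L) ^ 2 - α ^ 2 / (4 * d) + β s / μstar)) *
        Real.exp (α * x / (2 * d)) *
        Real.cos ((Real.pi / L) * (x - (h1 + h2) / 2))) :
    0 < μstar ∧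
    -- (a) the PDE
    (∀ x ∈ Set.Ioo h1 h2, ∀ t : ℝ,
      pT u x t - d * pXX u x t + α * pX u x t
        = -γ t * u x t + (β t / μstar) * u x t) ∧
    -- (b) Dirichlet boundary conditions
    (∀ t : ℝ, u h1 t = 0 ∧ u h2 t = 0) ∧
    -- (c) T-periodicity
    (∀ x t : ℝ, u x (t + T) = u x t) ∧
    -- (d) positivity
    (∀ x ∈ Set.Ioo h1 h2, ∀ t : ℝ, 0 < u x t) := by
  have hL0 : 0 < L := by rw [hL]; linarith
  have hLne : L ≠ 0 := ne_of_gt hL0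
  have hdne : d ≠ 0 := ne_of_gt hd
  have hTne : T ≠ 0 := ne_of_gt hT
  set k : ℝ := Real.pi / L with hk
  set m : ℝ := (h1 + h2) / 2 with hm
  have hk0 : 0 < k := div_pos Real.pi_pos hL0
  -- notations
  set Ib : ℝ := ∫ t in (0:ℝ)..T, β t with hIb
  set Ig : ℝ := ∫ t in (0:ℝ)..T, γ t with hIg
  have hIbpos : 0 < Ib := intervalIntegral.intervalIntegral_pos_of_pos
    (hβc.intervalIntegrable 0 T) hβpos hT
  have hIgpos : 0 < Ig := intervalIntegral.intervalIntegral_pos_of_pos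
    (hγc.intervalIntegrable 0 T) hγpos hT
  set D : ℝ := d * k ^ 2 + α ^ 2 / (4 * d) + (1 / T) * Ig with hD
  have hIbne : Ib ≠ 0 := ne_of_gt hIbpos
  have hDpos : 0 < D := by
    have h1' : 0 < d * k ^ 2 := by positivity
    have h2' : 0 ≤ α ^ 2 / (4 * d) := by positivity
    have h3' : 0 < (1 / T) * Ig := by positivity
    simp only [hD]
    linarith
  have hDne : D ≠ 0 := ne_of_gt hDpos
  have hμpos : 0 < μstar := by
    rw [hμ]
    exact div_pos (by positivity) hDpos
  have hμne : μstar ≠ 0 := ne_of_gt hμpos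
  set f : ℝ → ℝ := fun s => -γ s - d * k ^ 2 - α ^ 2 / (4 * d) + β s / μstar with hf
  have hfc : Continuous f := by
    apply Continuous.add
    · exact ((hγc.neg.sub continuous_const).sub continuous_const)
    · exact hβc.div_const μstar
  have hfint : ∀ a b : ℝ, IntervalIntegrable f MeasureTheory.volume a b :=
    fun a b => hfc.intervalIntegrable a b
  set E : ℝ → ℝ := fun t => Real.exp (∫ s in (0:ℝ)..t, f s) with hE
  set X : ℝ → ℝ := fun x => Real.exp (α * x / (2 * d)) * Real.cos (k * (x - m)) with hX
  have huEX : ∀ x t, u x t = E t * X x := by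
    intro x t
    rw [hu x t]
    simp only [hE, hX, hf, hk, hm]
    ring
  -- derivative of the exponential-in-x factor
  have hexpd : ∀ x : ℝ, HasDerivAt (fun y : ℝ => Real.exp (α * y / (2 * d)))
      (Real.exp (α * x / (2 * d)) * (α / (2 * d))) x := by
    intro x
    have h1 : HasDerivAt (fun y : ℝ => α * y / (2 * d)) (α / (2 * d)) x := by
      simpa using (((hasDerivAt_id x).const_mul α).div_const (2 * d))
    exact h1.exp
  have hcosd : ∀ x : ℝ, HasDerivAt (fun y : ℝ => Real.cos (k * (y - m)))
      (-Real.sin (k * (x - m)) * k) x := by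
    intro x
    have h1 : HasDerivAt (fun y : ℝ => k * (y - m)) k x := by
      simpa using (((hasDerivAt_id x).sub_const m).const_mul k)
    exact h1.cos
  have hsind : ∀ x : ℝ, HasDerivAt (fun y : ℝ => Real.sin (k * (y - m)))
      (Real.cos (k * (x - m)) * k) x := by
    intro x
    have h1 : HasDerivAt (fun y : ℝ => k * (y - m)) k x := by
      simpa using (((hasDerivAt_id x).sub_const m).const_mul k)
    exact h1.sin
  set X' : ℝ → ℝ := fun x => Real.exp (α * x / (2 * d)) *
      ((α / (2 * d)) * Real.cos (k * (x - m)) - k * Real.sin (k * (x - m))) with hX'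
  set X'' : ℝ → ℝ := fun x => Real.exp (α * x / (2 * d)) *
      (((α / (2 * d)) ^ 2 - k ^ 2) * Real.cos (k * (x - m))
        - (α / d) * k * Real.sin (k * (x - m))) with hX''
  have hXd : ∀ x : ℝ, HasDerivAt X (X' x) x := by
    intro x
    have h := (hexpd x).fun_mul (hcosd x)
    refine h.congr_deriv ?_
    simp only [hX']
    ring
  have hXd2 : ∀ x : ℝ, HasDerivAt X' (X'' x) x := by
    intro x
    have hg : HasDerivAt (fun y : ℝ =>
        (α / (2 * d)) * Real.cos (k * (y - m)) - k * Real.sin (k * (y - m)))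
        ((α / (2 * d)) * (-Real.sin (k * (x - m)) * k) - k * (Real.cos (k * (x - m)) * k)) x :=
      ((hcosd x).const_mul (α / (2 * d))).sub ((hsind x).const_mul k)
    have h := (hexpd x).fun_mul hg
    refine h.congr_deriv ?_
    simp only [hX'']
    field_simp
    ring
  -- time derivative of E
  have hFd : ∀ t : ℝ, HasDerivAt (fun s => ∫ r in (0:ℝ)..s, f r) (f t) t := by
    intro t
    exact (hfc.integral_hasStrictDerivAt 0 t).hasDerivAt
  have hEd : ∀ t : ℝ, HasDerivAt E (E t * f t) t := fun t => (hFd t).exp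
  -- partial derivatives of u
  have hpX : ∀ x t, pX u x t = E t * X' x := by
    intro x t
    have : (fun y => u y t) = fun y => E t * X y := funext fun y => huEX y t
    rw [pX, this]
    exact (((hXd x).const_mul (E t))).deriv
  have hpXX : ∀ x t, pXX u x t = E t * X'' x := by
    intro x t
    have : (fun y => pX u y t) = fun y => E t * X' y := funext fun y => hpX y t
    rw [pXX, this]
    exact (((hXd2 x).const_mul (E t))).deriv
  have hpT : ∀ x t, pT u x t = E t * f t * X x := by
    intro x t
    have : (fun s => u x s) = fun s => E s * X x := funext fun s => huEX x s
    rw [pT, this]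
    have := ((hEd t).mul_const (X x)).deriv
    simpa using this
  -- the key spatial identity : -d * X'' + α * X' = (d k² + α²/(4d)) * X
  have hspatial : ∀ x : ℝ, -d * X'' x + α * X' x = (d * k ^ 2 + α ^ 2 / (4 * d)) * X x := by
    intro x
    simp only [hX, hX', hX'']
    field_simp
    ring
  -- the zero mean of f over a period
  have hinv : (1 / μstar) * Ib = T * D := by
    rw [hμ]
    field_simp
  have hzero : (∫ s in (0:ℝ)..T, f s) = 0 := by
    have heq : f = fun s => ((1 / μstar) * β s + (-1) * γ s)
        + (fun _ : ℝ => -(d * k ^ 2) - α ^ 2 / (4 * d)) s := by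
      funext s; simp only [hf]; ring
    rw [heq]
    rw [intervalIntegral.integral_add
      (((continuous_const.fun_mul hβc).fun_add (continuous_const.fun_mul hγc)).intervalIntegrable 0 T)
      (intervalIntegrable_const)]
    rw [intervalIntegral.integral_add
      ((continuous_const.fun_mul hβc).intervalIntegrable 0 T)
      ((continuous_const.fun_mul hγc).intervalIntegrable 0 T)]
    rw [intervalIntegral.integral_const_mul, intervalIntegral.integral_const_mul,
      intervalIntegral.integral_const]
    rw [← hIb, ← hIg]
    rw [hinv]
    simp only [hD]
    field_simp
    ring_nf
    field_simp
    ring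
  -- periodicity of f
  have hfper : Function.Periodic f T := by
    intro s
    simp only [hf, hβper s, hγper s]
  have hkh1 : k * (h1 - m) = -(Real.pi / 2) := by
    have h1m : h1 - m = -(L / 2) := by simp only [hm]; rw [hL]; ring
    rw [hk, h1m]
    field_simp
    try ring
  have hkh2 : k * (h2 - m) = Real.pi / 2 := by
    have h2m : h2 - m = L / 2 := by simp only [hm]; rw [hL]; ring
    rw [hk, h2m]
    field_simp
    try ring
  refine ⟨hμpos, ?_, ?_, ?_, ?_⟩
  · -- (a) the PDE
    intro x hx t
    rw [hpT, hpXX, hpX, huEX]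
    have hft : f t = -γ t - (d * k ^ 2 + α ^ 2 / (4 * d)) + β t / μstar := by
      simp only [hf]; ring
    have hs := hspatial x
    calc E t * f t * X x - d * (E t * X'' x) + α * (E t * X' x)
        = E t * (f t * X x + (-d * X'' x + α * X' x)) := by ring
      _ = E t * (f t * X x + (d * k ^ 2 + α ^ 2 / (4 * d)) * X x) := by rw [hs]
      _ = -γ t * (E t * X x) + β t / μstar * (E t * X x) := by rw [hft]; ring
  · -- (b) boundary conditions
    intro t
    constructor
    · rw [huEX]
      simp only [hX, hkh1, Real.cos_neg, Real.cos_pi_div_two, mul_zero]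
    · rw [huEX]
      simp only [hX, hkh2, Real.cos_pi_div_two, mul_zero]
  · -- (c) periodicity
    intro x t
    rw [huEX, huEX]
    have hint : (∫ s in (0:ℝ)..(t + T), f s) = ∫ s in (0:ℝ)..t, f s := by
      rw [← intervalIntegral.integral_add_adjacent_intervals (hfint 0 t) (hfint t (t + T))]
      rw [hfper.intervalIntegral_add_eq t 0, zero_add, hzero, add_zero]
    have hEper : E (t + T) = E t := by
      simp only [hE]
      rw [hint]
    rw [hEper]
  · -- (d) positivity
    intro x hx t
    rw [huEX]
    have hcos : 0 < Real.cos (k * (x - m)) := by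
      apply Real.cos_pos_of_mem_Ioo
      constructor
      · rw [← hkh1]
        exact mul_lt_mul_of_pos_left (by linarith [hx.1]) hk0
      · rw [← hkh2]
        exact mul_lt_mul_of_pos_left (by linarith [hx.2]) hk0
    have hE0 : 0 < E t := Real.exp_pos _
    simp only [hX]
    positivity
end

section
/- Let d>0, α∈ℝ, T>0, h1<h2, and let β1,β2,γ1,γ2:[h1,h2]×ℝ→ℝ be continuous and T-periodic in t. Let μ1,μ2>0 and let φ,ψ:[h1,h2]×ℝ→ℝ be T-periodic in t, continuous together with φ_t,φ_x,φ_xx and ψ_t,ψ_x,ψ_xx (the spatial derivatives being continuous up to x=h1 and x=h2), with φ(h1,t)=φ(h2,t)=ψ(h1,t)=ψ(h2,t)=0 and φ>0, ψ>0 on (h1,h2)×ℝ, satisfying φ_t−dφ_xx+αφ_x=−γ1φ+(β1/μ1)φ and −ψ_t−dψ_xx−αψ_x=−γ2ψ+(β2/μ2)ψ on (h1,h2)×ℝ. Then ∫_0^T∫_{h1}^{h2}((β1/μ1)−(β2/μ2)+γ2−γ1)·φψ dx dt = 0; equivalently, (1/μ1)∫_0^T∫_{h1}^{h2}β1φψ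 dx dt − (1/μ2)∫_0^T∫_{h1}^{h2}β2φψ dx dt = ∫_0^T∫_{h1}^{h2}(γ1−γ2)φψ dx dt. Consequently, if β1(x,t)≤β2(x,t) and γ1(x,t)≥γ2(x,t) for all (x,t), and β1>0 on (h1,h2)×ℝ, then μ1≤μ2. -/
open MeasureTheory Set intervalIntegral

lemma aux_contOn_fix_t {h1 h2 : ℝ} {g : ℝ → ℝ → ℝ}
    (hg : ContinuousOn (fun p : ℝ × ℝ => g p.1 p.2) (Set.Icc h1 h2 ×ˢ Set.univ)) (t : ℝ) :
    ContinuousOn (fun x => g x t) (Set.Icc h1 h2) := by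
  have : ContinuousOn ((fun p : ℝ × ℝ => g p.1 p.2) ∘ (fun x => (x, t))) (Set.Icc h1 h2) :=
    hg.comp (Continuous.continuousOn (by continuity)) (fun x hx => ⟨hx, trivial⟩)
  exact this

lemma aux_contOn_fix_x {h1 h2 : ℝ} {g : ℝ → ℝ → ℝ}
    (hg : ContinuousOn (fun p : ℝ × ℝ => g p.1 p.2) (Set.Icc h1 h2 ×ˢ Set.univ))
    {x : ℝ} (hx : x ∈ Set.Icc h1 h2) :
    Continuous (fun t => g x t) := by
  rw [← continuousOn_univ]
  have : ContinuousOn ((fun p : ℝ × ℝ => g p.1 p.2) ∘ (fun t => (x, t))) Set.univ :=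
    hg.comp (Continuous.continuousOn (by continuity)) (fun s _ => ⟨hx, trivial⟩)
  exact this

lemma aux_ii_x {h1 h2 : ℝ} (hh : h1 ≤ h2) {g : ℝ → ℝ → ℝ}
    (hg : ContinuousOn (fun p : ℝ × ℝ => g p.1 p.2) (Set.Icc h1 h2 ×ˢ Set.univ)) (t : ℝ) :
    IntervalIntegrable (fun x => g x t) volume h1 h2 := by
  apply ContinuousOn.intervalIntegrable
  rw [Set.uIcc_of_le hh]
  exact aux_contOn_fix_t hg t

lemma aux_prod_int {h1 h2 a b : ℝ} {g : ℝ → ℝ → ℝ}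
    (hg : ContinuousOn (fun p : ℝ × ℝ => g p.1 p.2) (Set.Icc h1 h2 ×ˢ Set.univ)) :
    Integrable (Function.uncurry fun t x => g x t)
      ((volume.restrict (Set.Ioc a b)).prod (volume.restrict (Set.Ioc h1 h2))) := by
  rw [Measure.prod_restrict]
  apply MeasureTheory.IntegrableOn.mono_set
    (t := Set.Icc a b ×ˢ Set.Icc h1 h2)
  · apply ContinuousOn.integrableOn_compact (isCompact_Icc.prod isCompact_Icc)
    have : ContinuousOn ((fun p : ℝ × ℝ => g p.1 p.2) ∘ Prod.swap)
        (Set.Icc a b ×ˢ Set.Icc h1 h2) :=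
      hg.comp continuous_swap.continuousOn (fun p hp => ⟨hp.2, trivial⟩)
    exact this
  · exact Set.prod_mono Set.Ioc_subset_Icc_self Set.Ioc_subset_Icc_self

lemma aux_swap {h1 h2 a b : ℝ} (hh : h1 ≤ h2) (hab : a ≤ b) {g : ℝ → ℝ → ℝ}
    (hg : ContinuousOn (fun p : ℝ × ℝ => g p.1 p.2) (Set.Icc h1 h2 ×ˢ Set.univ)) :
    ∫ t in a..b, ∫ x in h1..h2, g x t = ∫ x in h1..h2, ∫ t in a..b, g x t := by
  simp only [intervalIntegral.integral_of_le hh, intervalIntegral.integral_of_le hab]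
  exact MeasureTheory.integral_integral_swap (aux_prod_int hg)

lemma aux_ii_inner {h1 h2 a b : ℝ} (hh : h1 ≤ h2) (hab : a ≤ b) {g : ℝ → ℝ → ℝ}
    (hg : ContinuousOn (fun p : ℝ × ℝ => g p.1 p.2) (Set.Icc h1 h2 ×ˢ Set.univ)) :
    IntervalIntegrable (fun t => ∫ x in h1..h2, g x t) volume a b := by
  rw [intervalIntegrable_iff_integrableOn_Ioc_of_le hab]
  have := (aux_prod_int (a := a) (b := b) hg).integral_prod_left
  simpa only [intervalIntegral.integral_of_le hh, Function.uncurry_apply_pair, IntegrableOn] using this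

/-- **Identity from the proof of Theorem 3.4(1).** If `(μ1, φ)` is a positive T-periodic
eigenpair of the periodic-parabolic problem with coefficients `(β1, γ1)` and `(μ2, ψ)` a
positive T-periodic eigenpair of the adjoint problem with coefficients `(β2, γ2)`, then
`∫₀ᵀ∫ ((β1/μ1) − (β2/μ2) + γ2 − γ1)φψ = 0`; consequently `β1 ≤ β2`, `γ1 ≥ γ2` force
`μ1 ≤ μ2`. -/
theorem periodic_parabolic_monotone_identity
    (d α T h1 h2 : ℝ) (hd : 0 < d) (hT : 0 < T) (hh : h1 < h2)
    (β1 β2 γ1 γ2 : ℝ → ℝ → ℝ)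
    (hβ1c : ContinuousOn (fun p : ℝ × ℝ => β1 p.1 p.2) (Set.Icc h1 h2 ×ˢ Set.univ))
    (hβ2c : ContinuousOn (fun p : ℝ × ℝ => β2 p.1 p.2) (Set.Icc h1 h2 ×ˢ Set.univ))
    (hγ1c : ContinuousOn (fun p : ℝ × ℝ => γ1 p.1 p.2) (Set.Icc h1 h2 ×ˢ Set.univ))
    (hγ2c : ContinuousOn (fun p : ℝ × ℝ => γ2 p.1 p.2) (Set.Icc h1 h2 ×ˢ Set.univ))
    (hβ1per : ∀ x t, β1 x (t + T) = β1 x t) (hβ2per : ∀ x t, β2 x (t + T) = β2 x t)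
    (hγ1per : ∀ x t, γ1 x (t + T) = γ1 x t) (hγ2per : ∀ x t, γ2 x (t + T) = γ2 x t)
    (μ1 μ2 : ℝ) (hμ1 : 0 < μ1) (hμ2 : 0 < μ2)
    (φ ψ : ℝ → ℝ → ℝ)
    -- regularity of φ : C^{2,1}, spatial derivatives continuous up to the boundary
    (hφper : ∀ x t, φ x (t + T) = φ x t)
    (hφc : ContinuousOn (fun p : ℝ × ℝ => φ p.1 p.2) (Set.Icc h1 h2 ×ˢ Set.univ))
    (hφxc : ContinuousOn (fun p : ℝ × ℝ => pX φ p.1 p.2) (Set.Icc h1 h2 ×ˢ Set.univ))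
    (hφxxc : ContinuousOn (fun p : ℝ × ℝ => pXX φ p.1 p.2) (Set.Icc h1 h2 ×ˢ Set.univ))
    (hφtc : ContinuousOn (fun p : ℝ × ℝ => pT φ p.1 p.2) (Set.Icc h1 h2 ×ˢ Set.univ))
    (hφdiff : ∀ t : ℝ, ∀ x ∈ Set.Icc h1 h2,
      DifferentiableAt ℝ (fun y => φ y t) x ∧
      DifferentiableAt ℝ (fun y => pX φ y t) x ∧
      DifferentiableAt ℝ (fun s => φ x s) t)
    -- regularity of ψ
    (hψper : ∀ x t, ψ x (t + T) = ψ x t)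
    (hψc : ContinuousOn (fun p : ℝ × ℝ => ψ p.1 p.2) (Set.Icc h1 h2 ×ˢ Set.univ))
    (hψxc : ContinuousOn (fun p : ℝ × ℝ => pX ψ p.1 p.2) (Set.Icc h1 h2 ×ˢ Set.univ))
    (hψxxc : ContinuousOn (fun p : ℝ × ℝ => pXX ψ p.1 p.2) (Set.Icc h1 h2 ×ˢ Set.univ))
    (hψtc : ContinuousOn (fun p : ℝ × ℝ => pT ψ p.1 p.2) (Set.Icc h1 h2 ×ˢ Set.univ))
    (hψdiff : ∀ t : ℝ, ∀ x ∈ Set.Icc h1 h2,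
      DifferentiableAt ℝ (fun y => ψ y t) x ∧
      DifferentiableAt ℝ (fun y => pX ψ y t) x ∧
      DifferentiableAt ℝ (fun s => ψ x s) t)
    -- boundary conditions and positivity
    (hφbc : ∀ t : ℝ, φ h1 t = 0 ∧ φ h2 t = 0)
    (hψbc : ∀ t : ℝ, ψ h1 t = 0 ∧ ψ h2 t = 0)
    (hφpos : ∀ t : ℝ, ∀ x ∈ Set.Ioo h1 h2, 0 < φ x t)
    (hψpos : ∀ t : ℝ, ∀ x ∈ Set.Ioo h1 h2, 0 < ψ x t)
    -- the two PDEs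
    (hφpde : ∀ t : ℝ, ∀ x ∈ Set.Ioo h1 h2,
      pT φ x t - d * pXX φ x t + α * pX φ x t
        = -γ1 x t * φ x t + (β1 x t / μ1) * φ x t)
    (hψpde : ∀ t : ℝ, ∀ x ∈ Set.Ioo h1 h2,
      -pT ψ x t - d * pXX ψ x t - α * pX ψ x t
        = -γ2 x t * ψ x t + (β2 x t / μ2) * ψ x t) :
    -- the multiply–subtract–integrate identity
    (∫ t in (0:ℝ)..T, ∫ x in h1..h2,
        ((β1 x t / μ1) - (β2 x t / μ2) + γ2 x t - γ1 x t) * (φ x t * ψ x t)) = 0 ∧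
    -- equivalent form
    (1 / μ1) * (∫ t in (0:ℝ)..T, ∫ x in h1..h2, β1 x t * (φ x t * ψ x t))
      - (1 / μ2) * (∫ t in (0:ℝ)..T, ∫ x in h1..h2, β2 x t * (φ x t * ψ x t))
      = (∫ t in (0:ℝ)..T, ∫ x in h1..h2, (γ1 x t - γ2 x t) * (φ x t * ψ x t)) ∧
    -- consequence: monotonicity of the principal eigenvalue
    ((∀ t : ℝ, ∀ x ∈ Set.Icc h1 h2, β1 x t ≤ β2 x t ∧ γ2 x t ≤ γ1 x t) →
      (∀ t : ℝ, ∀ x ∈ Set.Ioo h1 h2, 0 < β1 x t) → μ1 ≤ μ2) := by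
    -- abbreviations as local functions
  set G : ℝ → ℝ → ℝ := fun x t =>
    ((β1 x t / μ1) - (β2 x t / μ2) + γ2 x t - γ1 x t) * (φ x t * ψ x t) with hGdef
  set Pt : ℝ → ℝ → ℝ := fun x t => pT φ x t * ψ x t + φ x t * pT ψ x t with hPtdef
  set Qx : ℝ → ℝ → ℝ := fun x t =>
    d * ((pX ψ x t * pX φ x t + ψ x t * pXX φ x t)
        - (pX φ x t * pX ψ x t + φ x t * pXX ψ x t))
      - α * (pX φ x t * ψ x t + φ x t * pX ψ x t) with hQxdef
  -- continuity facts
  have hGc : ContinuousOn (fun p : ℝ × ℝ => G p.1 p.2) (Set.Icc h1 h2 ×ˢ Set.univ) :=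
    ((((hβ1c.div_const μ1).sub (hβ2c.div_const μ2)).add hγ2c).sub hγ1c).mul (hφc.mul hψc)
  have hPtc : ContinuousOn (fun p : ℝ × ℝ => Pt p.1 p.2) (Set.Icc h1 h2 ×ˢ Set.univ) :=
    (hφtc.mul hψc).add (hφc.mul hψtc)
  have hQxc : ContinuousOn (fun p : ℝ × ℝ => Qx p.1 p.2) (Set.Icc h1 h2 ×ˢ Set.univ) := by
    apply ContinuousOn.sub
    · exact ContinuousOn.const_smul (((hψxc.mul hφxc).add (hψc.mul hφxxc)).sub
        ((hφxc.mul hψxc).add (hφc.mul hψxxc))) d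
    · exact ContinuousOn.const_smul ((hφxc.mul hψc).add (hφc.mul hψxc)) α
  have hB1Pc : ContinuousOn (fun p : ℝ × ℝ => β1 p.1 p.2 * (φ p.1 p.2 * ψ p.1 p.2))
      (Set.Icc h1 h2 ×ˢ Set.univ) := hβ1c.mul (hφc.mul hψc)
  have hB2Pc : ContinuousOn (fun p : ℝ × ℝ => β2 p.1 p.2 * (φ p.1 p.2 * ψ p.1 p.2))
      (Set.Icc h1 h2 ×ˢ Set.univ) := hβ2c.mul (hφc.mul hψc)
  have hGamPc : ContinuousOn
      (fun p : ℝ × ℝ => (γ1 p.1 p.2 - γ2 p.1 p.2) * (φ p.1 p.2 * ψ p.1 p.2))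
      (Set.Icc h1 h2 ×ˢ Set.univ) := (hγ1c.sub hγ2c).mul (hφc.mul hψc)
  -- derivative in t of φψ
  have hPderiv : ∀ x ∈ Set.Icc h1 h2, ∀ t : ℝ,
      HasDerivAt (fun s => φ x s * ψ x s) (Pt x t) t := by
    intro x hx t
    exact ((hφdiff t x hx).2.2.hasDerivAt).mul ((hψdiff t x hx).2.2.hasDerivAt)
  -- derivative in x of the flux
  have hQderiv : ∀ t : ℝ, ∀ x ∈ Set.Icc h1 h2,
      HasDerivAt (fun y => d * (ψ y t * pX φ y t - φ y t * pX ψ y t)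
        - α * (φ y t * ψ y t)) (Qx x t) x := by
    intro t x hx
    obtain ⟨hφ1, hφ2, -⟩ := hφdiff t x hx
    obtain ⟨hψ1, hψ2, -⟩ := hψdiff t x hx
    exact (((hψ1.hasDerivAt.mul hφ2.hasDerivAt).sub
      (hφ1.hasDerivAt.mul hψ2.hasDerivAt)).const_mul d).sub
      ((hφ1.hasDerivAt.mul hψ1.hasDerivAt).const_mul α)
  -- pointwise identity on the interior
  have hptws : ∀ t : ℝ, ∀ x ∈ Set.Ioo h1 h2, Pt x t - Qx x t = G x t := by
    intro t x hx
    have e1 := hφpde t x hx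
    have e2 := hψpde t x hx
    simp only [hGdef, hPtdef, hQxdef]
    linear_combination ψ x t * e1 - φ x t * e2
  -- the flux integrates to zero
  have hQint : ∀ t : ℝ, (∫ x in h1..h2, Qx x t) = 0 := by
    intro t
    have h0 : (∫ x in h1..h2, Qx x t)
        = (d * (ψ h2 t * pX φ h2 t - φ h2 t * pX ψ h2 t) - α * (φ h2 t * ψ h2 t))
        - (d * (ψ h1 t * pX φ h1 t - φ h1 t * pX ψ h1 t) - α * (φ h1 t * ψ h1 t)) := by
      apply intervalIntegral.integral_eq_sub_of_hasDerivAt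
      · rw [Set.uIcc_of_le hh.le]
        exact fun x hx => hQderiv t x hx
      · exact aux_ii_x hh.le hQxc t
    rw [h0, (hφbc t).1, (hφbc t).2, (hψbc t).1, (hψbc t).2]
    ring
  -- inner integral identity
  have hinner : ∀ t : ℝ, (∫ x in h1..h2, G x t) = ∫ x in h1..h2, Pt x t := by
    intro t
    have e1 : (∫ x in h1..h2, G x t) = ∫ x in h1..h2, (Pt x t - Qx x t) := by
      rw [intervalIntegral.integral_of_le hh.le, intervalIntegral.integral_of_le hh.le,
        MeasureTheory.integral_Ioc_eq_integral_Ioo, MeasureTheory.integral_Ioc_eq_integral_Ioo]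
      exact MeasureTheory.setIntegral_congr_fun measurableSet_Ioo
        (fun x hx => (hptws t x hx).symm)
    rw [e1, intervalIntegral.integral_sub (aux_ii_x hh.le hPtc t) (aux_ii_x hh.le hQxc t),
      hQint t, sub_zero]
  -- Part 1 : the double integral vanishes
  have hpart1 : (∫ t in (0:ℝ)..T, ∫ x in h1..h2, G x t) = 0 := by
    rw [intervalIntegral.integral_congr
      (g := fun t => ∫ x in h1..h2, Pt x t) (fun t _ => hinner t)]
    rw [aux_swap hh.le hT.le hPtc]
    have hzero : ∀ x ∈ Set.uIcc h1 h2, (∫ t in (0:ℝ)..T, Pt x t) = 0 := by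
      intro x hx
      rw [Set.uIcc_of_le hh.le] at hx
      have hftc : (∫ t in (0:ℝ)..T, Pt x t) = φ x T * ψ x T - φ x 0 * ψ x 0 := by
        apply intervalIntegral.integral_eq_sub_of_hasDerivAt
        · exact fun t _ => hPderiv x hx t
        · exact (aux_contOn_fix_x hPtc hx).intervalIntegrable _ _
      have hφT : φ x T = φ x 0 := by simpa using hφper x 0
      have hψT : ψ x T = ψ x 0 := by simpa using hψper x 0
      rw [hftc, hφT, hψT, sub_self]
    rw [intervalIntegral.integral_congr (g := fun _ => (0:ℝ)) hzero]
    simp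
  refine ⟨hpart1, ?_, ?_⟩
  · -- Part 2 : equivalent form
    have hsplit : ∀ t : ℝ, (∫ x in h1..h2, G x t)
        = (1 / μ1) * (∫ x in h1..h2, β1 x t * (φ x t * ψ x t))
          - (1 / μ2) * (∫ x in h1..h2, β2 x t * (φ x t * ψ x t))
          - (∫ x in h1..h2, (γ1 x t - γ2 x t) * (φ x t * ψ x t)) := by
      intro t
      have e : (fun x => G x t)
          = fun x => (1 / μ1) * (β1 x t * (φ x t * ψ x t))
            - (1 / μ2) * (β2 x t * (φ x t * ψ x t))
            - ((γ1 x t - γ2 x t) * (φ x t * ψ x t)) := by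
        funext x
        simp only [hGdef]
        field_simp
        ring
      have i1 := aux_ii_x (g := fun x t => β1 x t * (φ x t * ψ x t)) hh.le hB1Pc t
      have i2 := aux_ii_x (g := fun x t => β2 x t * (φ x t * ψ x t)) hh.le hB2Pc t
      have i3 := aux_ii_x (g := fun x t => (γ1 x t - γ2 x t) * (φ x t * ψ x t)) hh.le hGamPc t
      rw [e, intervalIntegral.integral_sub ((i1.const_mul (1/μ1)).sub (i2.const_mul (1/μ2))) i3,
        intervalIntegral.integral_sub (i1.const_mul (1/μ1)) (i2.const_mul (1/μ2)),
        intervalIntegral.integral_const_mul, intervalIntegral.integral_const_mul]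
    have houter : (∫ t in (0:ℝ)..T, ∫ x in h1..h2, G x t)
        = (1 / μ1) * (∫ t in (0:ℝ)..T, ∫ x in h1..h2, β1 x t * (φ x t * ψ x t))
          - (1 / μ2) * (∫ t in (0:ℝ)..T, ∫ x in h1..h2, β2 x t * (φ x t * ψ x t))
          - (∫ t in (0:ℝ)..T, ∫ x in h1..h2, (γ1 x t - γ2 x t) * (φ x t * ψ x t)) := by
      rw [intervalIntegral.integral_congr
        (g := fun t => (1 / μ1) * (∫ x in h1..h2, β1 x t * (φ x t * ψ x t))
          - (1 / μ2) * (∫ x in h1..h2, β2 x t * (φ x t * ψ x t))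
          - (∫ x in h1..h2, (γ1 x t - γ2 x t) * (φ x t * ψ x t)))
        (fun t _ => hsplit t)]
      have j1 := aux_ii_inner (g := fun x t => β1 x t * (φ x t * ψ x t)) hh.le hT.le hB1Pc
      have j2 := aux_ii_inner (g := fun x t => β2 x t * (φ x t * ψ x t)) hh.le hT.le hB2Pc
      have j3 := aux_ii_inner (g := fun x t => (γ1 x t - γ2 x t) * (φ x t * ψ x t)) hh.le hT.le hGamPc
      rw [intervalIntegral.integral_sub ((j1.const_mul (1/μ1)).sub (j2.const_mul (1/μ2))) j3,
        intervalIntegral.integral_sub (j1.const_mul (1/μ1)) (j2.const_mul (1/μ2)),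
        intervalIntegral.integral_const_mul, intervalIntegral.integral_const_mul]
    rw [hpart1] at houter
    linarith
  · -- Part 3 : monotonicity
    intro hle hbpos
    by_contra hcon
    push_neg at hcon
    have hneg : ∀ t : ℝ, ∀ x ∈ Set.Ioo h1 h2, 0 < -G x t := by
      intro t x hx
      have hb := hbpos t x hx
      have hP : 0 < φ x t * ψ x t := mul_pos (hφpos t x hx) (hψpos t x hx)
      obtain ⟨hβ, hγ⟩ := hle t x (Set.Ioo_subset_Icc_self hx)
      have h1' : β1 x t / μ1 < β1 x t / μ2 := div_lt_div_of_pos_left hb hμ2 hcon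
      have h2' : β1 x t / μ2 ≤ β2 x t / μ2 := by gcongr
      have hf : (β1 x t / μ1) - (β2 x t / μ2) + γ2 x t - γ1 x t < 0 := by linarith
      have := mul_pos (neg_pos.mpr hf) hP
      simp only [hGdef]
      nlinarith
    have hFneg : ∀ t : ℝ, (∫ x in h1..h2, G x t) < 0 := by
      intro t
      have hp := intervalIntegral_pos_of_pos_on (f := fun x => -G x t)
        ((aux_ii_x hh.le hGc t).neg) (fun x hx => hneg t x hx) hh
      rw [intervalIntegral.integral_neg] at hp
      linarith
    have hp2 := intervalIntegral_pos_of_pos_on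
      (f := fun t => -(∫ x in h1..h2, G x t))
      ((aux_ii_inner hh.le hT.le hGc).neg) (fun t _ => neg_pos.mpr (hFneg t)) hT
    rw [intervalIntegral.integral_neg, hpart1] at hp2
    simp at hp2
end

section
/- Let d>0, α∈ℝ, T>0, 0<l1<l2, and let β,γ:[0,l2]×ℝ→ℝ be continuous and T-periodic in t with β>0. Let μ1,μ2>0, let φ:[0,l1]×ℝ→ℝ be T-periodic in t, continuous together with φ_t,φ_x,φ_xx (φ_x continuous up to the boundary), with φ(0,t)=φ(l1,t)=0, φ>0 on (0,l1)×ℝ, satisfying φ_t−dφ_xx+αφ_x=−γφ+(β/μ1)φ on (0,l1)×ℝ; and let ψ:[0,l2]×ℝ→ℝ be T-periodic in t, continuous together with ψ_t,ψ_x,ψ_xx, with ψ(0,t)=ψ(l2,t)=0, ψ>0 on (0,l2)×ℝ, satisfying −ψ_t−dψ_xx−αψ_x=−γψ+(β/μ2)ψ on (0,l2)×ℝ. Then (1/μ1−1/μ2)·∫_0^T∫_0^{l1}β(x,t)φ(x,t)ψ(x,t)dx dt = −d·∫_0^Tψ(l1,t)·φ_x(l1,t)dt. If moreover φ_x(l1,t)<0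 for all t (Hopf boundary-point inequality), then μ1<μ2. -/
open MeasureTheory Set intervalIntegral

/-- Slice continuity in the first variable. -/
lemma sliceX {f : ℝ → ℝ → ℝ} {s : Set ℝ}
    (h : ContinuousOn (fun p : ℝ × ℝ => f p.1 p.2) (s ×ˢ (Set.univ : Set ℝ))) (t : ℝ) :
    ContinuousOn (fun x => f x t) s :=
  h.comp ((continuous_id.prodMk continuous_const).continuousOn)
    (fun x hx => ⟨hx, Set.mem_univ _⟩)

/-- Slice continuity in the second variable. -/
lemma sliceT {f : ℝ → ℝ → ℝ} {s : Set ℝ}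
    (h : ContinuousOn (fun p : ℝ × ℝ => f p.1 p.2) (s ×ˢ (Set.univ : Set ℝ)))
    {x : ℝ} (hx : x ∈ s) :
    Continuous (fun t => f x t) :=
  h.comp_continuous (continuous_const.prodMk continuous_id)
    (fun t => ⟨hx, Set.mem_univ _⟩)

/-- **Identity from the proof of Theorem 3.4(3).** For the principal eigenpair `(μ1, φ)`
on `(0,l1)` and the adjoint eigenpair `(μ2, ψ)` on the larger interval `(0,l2)`:
`(1/μ1 − 1/μ2)·∫₀ᵀ∫₀^{l1} βφψ = −d·∫₀ᵀ ψ(l1,t)φ_x(l1,t) dt`, and if the Hopf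
boundary-point inequality `φ_x(l1,t) < 0` holds, then `μ1 < μ2`. -/
theorem nested_interval_eigenvalue_identity
    (d α T l1 l2 : ℝ) (hd : 0 < d) (hT : 0 < T) (hl1 : 0 < l1) (hl12 : l1 < l2)
    (β γ : ℝ → ℝ → ℝ)
    (hβc : ContinuousOn (fun p : ℝ × ℝ => β p.1 p.2) (Set.Icc 0 l2 ×ˢ Set.univ))
    (hγc : ContinuousOn (fun p : ℝ × ℝ => γ p.1 p.2) (Set.Icc 0 l2 ×ˢ Set.univ))
    (hβper : ∀ x t, β x (t + T) = β x t) (hγper : ∀ x t, γ x (t + T) = γ x t)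
    (hβpos : ∀ x ∈ Set.Icc (0:ℝ) l2, ∀ t : ℝ, 0 < β x t)
    (μ1 μ2 : ℝ) (hμ1 : 0 < μ1) (hμ2 : 0 < μ2)
    (φ ψ : ℝ → ℝ → ℝ)
    -- regularity, periodicity, boundary data and positivity of φ on [0,l1]
    (hφper : ∀ x t, φ x (t + T) = φ x t)
    (hφc : ContinuousOn (fun p : ℝ × ℝ => φ p.1 p.2) (Set.Icc 0 l1 ×ˢ Set.univ))
    (hφxc : ContinuousOn (fun p : ℝ × ℝ => pX φ p.1 p.2) (Set.Icc 0 l1 ×ˢ Set.univ))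
    (hφxxc : ContinuousOn (fun p : ℝ × ℝ => pXX φ p.1 p.2) (Set.Icc 0 l1 ×ˢ Set.univ))
    (hφtc : ContinuousOn (fun p : ℝ × ℝ => pT φ p.1 p.2) (Set.Icc 0 l1 ×ˢ Set.univ))
    (hφdiff : ∀ t : ℝ, ∀ x ∈ Set.Icc (0:ℝ) l1,
      DifferentiableAt ℝ (fun y => φ y t) x ∧
      DifferentiableAt ℝ (fun y => pX φ y t) x ∧
      DifferentiableAt ℝ (fun s => φ x s) t)
    (hφbc : ∀ t : ℝ, φ 0 t = 0 ∧ φ l1 t = 0)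
    (hφpos : ∀ t : ℝ, ∀ x ∈ Set.Ioo (0:ℝ) l1, 0 < φ x t)
    (hφpde : ∀ t : ℝ, ∀ x ∈ Set.Ioo (0:ℝ) l1,
      pT φ x t - d * pXX φ x t + α * pX φ x t
        = -γ x t * φ x t + (β x t / μ1) * φ x t)
    -- regularity, periodicity, boundary data and positivity of ψ on [0,l2]
    (hψper : ∀ x t, ψ x (t + T) = ψ x t)
    (hψc : ContinuousOn (fun p : ℝ × ℝ => ψ p.1 p.2) (Set.Icc 0 l2 ×ˢ Set.univ))
    (hψxc : ContinuousOn (fun p : ℝ × ℝ => pX ψ p.1 p.2) (Set.Icc 0 l2 ×ˢ Set.univ))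
    (hψxxc : ContinuousOn (fun p : ℝ × ℝ => pXX ψ p.1 p.2) (Set.Icc 0 l2 ×ˢ Set.univ))
    (hψtc : ContinuousOn (fun p : ℝ × ℝ => pT ψ p.1 p.2) (Set.Icc 0 l2 ×ˢ Set.univ))
    (hψdiff : ∀ t : ℝ, ∀ x ∈ Set.Icc (0:ℝ) l2,
      DifferentiableAt ℝ (fun y => ψ y t) x ∧
      DifferentiableAt ℝ (fun y => pX ψ y t) x ∧
      DifferentiableAt ℝ (fun s => ψ x s) t)
    (hψbc : ∀ t : ℝ, ψ 0 t = 0 ∧ ψ l2 t = 0)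
    (hψpos : ∀ t : ℝ, ∀ x ∈ Set.Ioo (0:ℝ) l2, 0 < ψ x t)
    (hψpde : ∀ t : ℝ, ∀ x ∈ Set.Ioo (0:ℝ) l2,
      -pT ψ x t - d * pXX ψ x t - α * pX ψ x t
        = -γ x t * ψ x t + (β x t / μ2) * ψ x t) :
    -- the boundary-term identity
    (1 / μ1 - 1 / μ2) *
        (∫ t in (0:ℝ)..T, ∫ x in (0:ℝ)..l1, β x t * (φ x t * ψ x t))
      = -d * ∫ t in (0:ℝ)..T, ψ l1 t * pX φ l1 t ∧
    -- consequence under the Hopf boundary-point inequality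
    ((∀ t : ℝ, pX φ l1 t < 0) → μ1 < μ2) := by
  have hl1le : (0:ℝ) ≤ l1 := hl1.le
  have hsub : Set.Icc (0:ℝ) l1 ⊆ Set.Icc (0:ℝ) l2 := Set.Icc_subset_Icc le_rfl hl12.le
  have hsubP : (Set.Icc (0:ℝ) l1 ×ˢ (Set.univ : Set ℝ)) ⊆ Set.Icc (0:ℝ) l2 ×ˢ Set.univ :=
    Set.prod_mono hsub (subset_refl _)
  have hl1mem : l1 ∈ Set.Icc (0:ℝ) l1 := ⟨hl1le, le_rfl⟩
  have hl1mem2 : l1 ∈ Set.Icc (0:ℝ) l2 := ⟨hl1le, hl12.le⟩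
  -- abbreviations
  set g : ℝ → ℝ → ℝ := fun x t => pT φ x t * ψ x t + φ x t * pT ψ x t with hg
  set c2 : ℝ := 1 / μ1 - 1 / μ2 with hc2
  -- joint continuity of g on [0,l1] × ℝ
  have hg_cont : ContinuousOn (fun p : ℝ × ℝ => g p.1 p.2) (Set.Icc 0 l1 ×ˢ Set.univ) := by
    simp only [hg]
    exact (hφtc.mul (hψc.mono hsubP)).add (hφc.mul (hψtc.mono hsubP))
  -- Step A : for each t, the x-integral identity
  have keyA : ∀ t : ℝ,
      (∫ x in (0:ℝ)..l1, g x t)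
        = d * (pX φ l1 t * ψ l1 t)
          + c2 * ∫ x in (0:ℝ)..l1, β x t * (φ x t * ψ x t) := by
    intro t
    -- the flux function and its derivative
    set Ff : ℝ → ℝ := fun x =>
      d * (pX φ x t * ψ x t - φ x t * pX ψ x t) - α * (φ x t * ψ x t) with hFf
    set Fp : ℝ → ℝ := fun x =>
      d * (pXX φ x t * ψ x t - φ x t * pXX ψ x t)
        - α * (pX φ x t * ψ x t + φ x t * pX ψ x t) with hFp
    have hderiv : ∀ x ∈ Set.uIcc (0:ℝ) l1, HasDerivAt Ff (Fp x) x := by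
      intro x hx
      rw [Set.uIcc_of_le hl1le] at hx
      have hx2 : x ∈ Set.Icc (0:ℝ) l2 := hsub hx
      have hφ1 : HasDerivAt (fun y => φ y t) (pX φ x t) x := (hφdiff t x hx).1.hasDerivAt
      have hφ2 : HasDerivAt (fun y => pX φ y t) (pXX φ x t) x := (hφdiff t x hx).2.1.hasDerivAt
      have hψ1 : HasDerivAt (fun y => ψ y t) (pX ψ x t) x := (hψdiff t x hx2).1.hasDerivAt
      have hψ2 : HasDerivAt (fun y => pX ψ y t) (pXX ψ x t) x := (hψdiff t x hx2).2.1.hasDerivAt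
      have h := (((hφ2.mul hψ1).sub (hφ1.mul hψ2)).const_mul d).sub
        ((hφ1.mul hψ1).const_mul α)
      have : HasDerivAt Ff
          (d * (pXX φ x t * ψ x t + pX φ x t * pX ψ x t
              - (pX φ x t * pX ψ x t + φ x t * pXX ψ x t))
            - α * (pX φ x t * ψ x t + φ x t * pX ψ x t)) x := h
      convert this using 1
      simp only [hFp]
      ring
    -- integrability in x
    have hcFp : ContinuousOn Fp (Set.Icc 0 l1) := by
      simp only [hFp]
      exact (continuousOn_const.mul (((sliceX hφxxc t).mul ((sliceX hψc t).mono hsub)).sub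
          ((sliceX hφc t).mul ((sliceX hψxxc t).mono hsub)))).sub
        (continuousOn_const.mul (((sliceX hφxc t).mul ((sliceX hψc t).mono hsub)).add
          ((sliceX hφc t).mul ((sliceX hψxc t).mono hsub))))
    have hFpInt : IntervalIntegrable Fp volume 0 l1 := by
      apply ContinuousOn.intervalIntegrable
      rwa [Set.uIcc_of_le hl1le]
    have hβφψc : ContinuousOn (fun x => β x t * (φ x t * ψ x t)) (Set.Icc 0 l1) :=
      ((sliceX hβc t).mono hsub).mul ((sliceX hφc t).mul ((sliceX hψc t).mono hsub))
    have hβφψInt : IntervalIntegrable (fun x => β x t * (φ x t * ψ x t)) volume 0 l1 := by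
      apply ContinuousOn.intervalIntegrable
      rwa [Set.uIcc_of_le hl1le]
    -- FTC for the flux
    have hFTC : (∫ x in (0:ℝ)..l1, Fp x) = Ff l1 - Ff 0 :=
      intervalIntegral.integral_eq_sub_of_hasDerivAt hderiv hFpInt
    have hFl1 : Ff l1 = d * (pX φ l1 t * ψ l1 t) := by
      simp [hFf, (hφbc t).2]
    have hF0 : Ff 0 = 0 := by
      simp [hFf, (hφbc t).1, (hψbc t).1]
    -- pointwise identity on the open interval
    have hpoint : ∀ x ∈ Set.Ioo (0:ℝ) l1,
        g x t = Fp x + c2 * (β x t * (φ x t * ψ x t)) := by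
      intro x hx
      have hx2 : x ∈ Set.Ioo (0:ℝ) l2 := ⟨hx.1, hx.2.trans hl12⟩
      have h1 := hφpde t x hx
      have h2 := hψpde t x hx2
      simp only [hg, hFp, hc2]
      linear_combination (ψ x t) * h1 - (φ x t) * h2
    -- transfer to interval integrals
    have hcongr : (∫ x in (0:ℝ)..l1, g x t)
        = ∫ x in (0:ℝ)..l1, (Fp x + c2 * (β x t * (φ x t * ψ x t))) := by
      rw [intervalIntegral.integral_of_le hl1le, intervalIntegral.integral_of_le hl1le,
        MeasureTheory.integral_Ioc_eq_integral_Ioo, MeasureTheory.integral_Ioc_eq_integral_Ioo]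
      exact MeasureTheory.setIntegral_congr_fun measurableSet_Ioo hpoint
    rw [hcongr, intervalIntegral.integral_add hFpInt (hβφψInt.const_mul c2),
      intervalIntegral.integral_const_mul, hFTC, hFl1, hF0, sub_zero]
  -- Step B : product integrability
  have hprodInt : MeasureTheory.Integrable (Function.uncurry (fun t x => g x t))
      ((volume.restrict (Set.Ioc 0 T)).prod (volume.restrict (Set.Ioc 0 l1))) := by
    rw [MeasureTheory.Measure.prod_restrict]
    have hco : ContinuousOn (fun p : ℝ × ℝ => g p.2 p.1) (Set.Icc 0 T ×ˢ Set.Icc 0 l1) := by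
      apply hg_cont.comp (continuous_snd.prodMk continuous_fst).continuousOn
      exact fun p hp => ⟨hp.2, Set.mem_univ _⟩
    have hIcc : MeasureTheory.IntegrableOn (fun p : ℝ × ℝ => g p.2 p.1)
        (Set.Icc 0 T ×ˢ Set.Icc 0 l1) volume :=
      hco.integrableOn_compact (isCompact_Icc.prod isCompact_Icc)
    have h2 := hIcc.mono_set (Set.prod_mono Set.Ioc_subset_Icc_self Set.Ioc_subset_Icc_self)
    rw [MeasureTheory.Measure.volume_eq_prod] at h2
    exact h2
  -- the inner time-integral vanishes by periodicity
  have hinner0 : ∀ x ∈ Set.Icc (0:ℝ) l1, (∫ s in (0:ℝ)..T, g x s) = 0 := by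
    intro x hx
    have hx2 : x ∈ Set.Icc (0:ℝ) l2 := hsub hx
    have hderivT : ∀ s ∈ Set.uIcc (0:ℝ) T,
        HasDerivAt (fun r => φ x r * ψ x r) (g x s) s := by
      intro s _
      exact ((hφdiff s x hx).2.2.hasDerivAt).mul ((hψdiff s x hx2).2.2.hasDerivAt)
    have hgint : IntervalIntegrable (fun s => g x s) volume 0 T :=
      (sliceT hg_cont hx).intervalIntegrable 0 T
    have hper : φ x T * ψ x T = φ x 0 * ψ x 0 := by
      have h1 := hφper x 0
      have h2 := hψper x 0
      rw [zero_add] at h1 h2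
      rw [h1, h2]
    have h := intervalIntegral.integral_eq_sub_of_hasDerivAt hderivT hgint
    rw [h, hper, sub_self]
  -- the double integral of g vanishes (Fubini)
  have hdbl0 : (∫ t in (0:ℝ)..T, ∫ x in (0:ℝ)..l1, g x t) = 0 := by
    have swap := MeasureTheory.integral_integral_swap hprodInt
    have lhs_eq : (∫ t in (0:ℝ)..T, ∫ x in (0:ℝ)..l1, g x t)
        = ∫ t in Set.Ioc (0:ℝ) T, ∫ x in Set.Ioc (0:ℝ) l1, g x t := by
      rw [intervalIntegral.integral_of_le hT.le]
      apply MeasureTheory.setIntegral_congr_fun measurableSet_Ioc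
      intro t _
      exact intervalIntegral.integral_of_le hl1le
    rw [lhs_eq, swap]
    have hz : ∀ x ∈ Set.Ioc (0:ℝ) l1, (∫ t in Set.Ioc (0:ℝ) T, g x t) = 0 := by
      intro x hx
      have h := hinner0 x (Set.Ioc_subset_Icc_self hx)
      rwa [intervalIntegral.integral_of_le hT.le] at h
    rw [MeasureTheory.setIntegral_congr_fun measurableSet_Ioc hz]
    simp
  -- integrability of the inner integral in t
  have hI1int : IntervalIntegrable (fun t => ∫ x in (0:ℝ)..l1, g x t) volume 0 T := by
    rw [intervalIntegrable_iff_integrableOn_Ioc_of_le hT.le]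
    have heq : (fun t => ∫ x in (0:ℝ)..l1, g x t)
        = fun t => ∫ x, Function.uncurry (fun t x => g x t) (t, x)
            ∂(volume.restrict (Set.Ioc 0 l1)) := by
      funext t
      rw [intervalIntegral.integral_of_le hl1le]
      rfl
    rw [heq]
    exact hprodInt.integral_prod_left
  -- integrability of the boundary term in t
  have hc1cont : Continuous fun t => d * (pX φ l1 t * ψ l1 t) :=
    continuous_const.mul ((sliceT hφxc hl1mem).mul (sliceT hψc hl1mem2))
  have hc1int : IntervalIntegrable (fun t => d * (pX φ l1 t * ψ l1 t)) volume 0 T :=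
    hc1cont.intervalIntegrable 0 T
  -- the main identity
  have main : c2 * (∫ t in (0:ℝ)..T, ∫ x in (0:ℝ)..l1, β x t * (φ x t * ψ x t))
      = -d * ∫ t in (0:ℝ)..T, ψ l1 t * pX φ l1 t := by
    have heq : (fun t => c2 * ∫ x in (0:ℝ)..l1, β x t * (φ x t * ψ x t))
        = fun t => (∫ x in (0:ℝ)..l1, g x t) - d * (pX φ l1 t * ψ l1 t) := by
      funext t
      rw [keyA t]
      ring
    calc c2 * (∫ t in (0:ℝ)..T, ∫ x in (0:ℝ)..l1, β x t * (φ x t * ψ x t))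
        = ∫ t in (0:ℝ)..T, c2 * ∫ x in (0:ℝ)..l1, β x t * (φ x t * ψ x t) :=
          (intervalIntegral.integral_const_mul _ _).symm
      _ = ∫ t in (0:ℝ)..T, ((∫ x in (0:ℝ)..l1, g x t) - d * (pX φ l1 t * ψ l1 t)) := by
          rw [heq]
      _ = (∫ t in (0:ℝ)..T, ∫ x in (0:ℝ)..l1, g x t)
            - ∫ t in (0:ℝ)..T, d * (pX φ l1 t * ψ l1 t) :=
          intervalIntegral.integral_sub hI1int hc1int
      _ = -(d * ∫ t in (0:ℝ)..T, pX φ l1 t * ψ l1 t) := by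
          rw [hdbl0, intervalIntegral.integral_const_mul, zero_sub]
      _ = -d * ∫ t in (0:ℝ)..T, ψ l1 t * pX φ l1 t := by
          rw [neg_mul]
          congr 2
          apply intervalIntegral.integral_congr
          intro t _
          ring
  refine ⟨main, ?_⟩
  intro hHopf
  -- positivity of the boundary integral
  have hψl1 : ∀ t : ℝ, 0 < ψ l1 t := fun t => hψpos t l1 ⟨hl1, hl12⟩
  have hbint : IntervalIntegrable (fun t => -(ψ l1 t * pX φ l1 t)) volume 0 T :=
    (((sliceT hψc hl1mem2).mul (sliceT hφxc hl1mem)).neg).intervalIntegrable 0 T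
  have hneg : (∫ t in (0:ℝ)..T, ψ l1 t * pX φ l1 t) < 0 := by
    have hpos := intervalIntegral.intervalIntegral_pos_of_pos_on hbint
      (fun t _ => by nlinarith [hψl1 t, hHopf t]) hT
    rw [intervalIntegral.integral_neg] at hpos
    linarith
  have hRHS : 0 < -d * ∫ t in (0:ℝ)..T, ψ l1 t * pX φ l1 t := by nlinarith
  -- the weighted double integral is nonnegative
  have hJnonneg : 0 ≤ ∫ t in (0:ℝ)..T, ∫ x in (0:ℝ)..l1, β x t * (φ x t * ψ x t) := by
    apply intervalIntegral.integral_nonneg hT.le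
    intro t _
    apply intervalIntegral.integral_nonneg hl1le
    intro x hx
    have hβ := (hβpos x (hsub hx) t).le
    have hφn : 0 ≤ φ x t := by
      rcases eq_or_lt_of_le hx.1 with h | h
      · rw [← h]; exact le_of_eq (hφbc t).1.symm
      · rcases eq_or_lt_of_le hx.2 with h' | h'
        · rw [h']; exact le_of_eq (hφbc t).2.symm
        · exact (hφpos t x ⟨h, h'⟩).le
    have hψn : 0 ≤ ψ x t := by
      rcases eq_or_lt_of_le hx.1 with h | h
      · rw [← h]; exact le_of_eq (hψbc t).1.symm
      · exact (hψpos t x ⟨h, lt_of_le_of_lt hx.2 hl12⟩).le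
    exact mul_nonneg hβ (mul_nonneg hφn hψn)
  have hc2pos : 0 < c2 := by
    by_contra hle
    push_neg at hle
    nlinarith [main, hRHS, hJnonneg]
  have hlt : 1 / μ2 < 1 / μ1 := by
    rw [hc2] at hc2pos
    linarith
  rw [div_lt_div_iff₀ hμ2 hμ1] at hlt
  linarith
end

section
/- Let d>0, α∈ℝ, T>0, h1<h2, set L=h2−h1, and let β,γ:[h1,h2]×ℝ→ℝ be continuous, positive, and T-periodic in t. Define γ_m(t)=min_{x∈[h1,h2]}γ(x,t), γ_M(t)=max_{x∈[h1,h2]}γ(x,t), β_m(t)=min_{x∈[h1,h2]}β(x,t), β_M(t)=max_{x∈[h1,h2]}β(x,t). Suppose μ0>0 and φ:[h1,h2]×ℝ→ℝ is T-periodic in t, continuous together with φ_t,φ_x,φ_xx (φ_x continuous up to the boundary), positive on (h1,h2)×ℝ, with φ(h1,t)=φ(h2,t)=0, and satisfies φ_t−dφ_xx+αφ_x=−γ(x,t)φ+(β(x,t)/μ0)φ on (h1,h2)×ℝ. Then ((1/T)∫_0^Tβ_m(t)dt)/(d(π/L)²+α²/(4d)+(1/T)∫_0^Tγ_M(t)dt)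 ≤ μ0 ≤ ((1/T)∫_0^Tβ_M(t)dt)/(d(π/L)²+α²/(4d)+(1/T)∫_0^Tγ_m(t)dt). -/
open Set MeasureTheory intervalIntegral

lemma contGreatest {f : ℝ → ℝ → ℝ} {a b : ℝ}
    (hf : ContinuousOn (fun p : ℝ × ℝ => f p.1 p.2) (Icc a b ×ˢ univ))
    (g : ℝ → ℝ) (hg : ∀ t, IsGreatest ((fun x => f x t) '' Icc a b) (g t)) :
    Continuous g := by
  rw [Metric.continuous_iff]
  intro t₀ ε hε
  have hK : IsCompact (Icc a b ×ˢ Icc (t₀ - 1) (t₀ + 1)) := isCompact_Icc.prod isCompact_Icc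
  have hfc : ContinuousOn (fun p : ℝ × ℝ => f p.1 p.2) (Icc a b ×ˢ Icc (t₀ - 1) (t₀ + 1)) :=
    hf.mono (fun p hp => ⟨hp.1, trivial⟩)
  have huc := hK.uniformContinuousOn_of_continuous hfc
  rw [Metric.uniformContinuousOn_iff] at huc
  obtain ⟨δ, hδ, hd⟩ := huc (ε / 2) (by linarith)
  refine ⟨min δ 1, by positivity, fun t ht => ?_⟩
  have key : ∀ x ∈ Icc a b, dist (f x t) (f x t₀) < ε / 2 := by
    intro x hx
    have h1 : |t - t₀| < 1 := lt_of_lt_of_le (Real.dist_eq t t₀ ▸ ht) (min_le_right _ _)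
    have hmem : (x, t) ∈ Icc a b ×ˢ Icc (t₀ - 1) (t₀ + 1) :=
      ⟨hx, by constructor <;> [linarith [abs_lt.1 h1]; linarith [abs_lt.1 h1]]⟩
    have hmem0 : (x, t₀) ∈ Icc a b ×ˢ Icc (t₀ - 1) (t₀ + 1) :=
      ⟨hx, by constructor <;> linarith⟩
    have hdist : dist ((x, t) : ℝ × ℝ) (x, t₀) < δ := by
      rw [Prod.dist_eq]
      simp only [dist_self]
      exact max_lt hδ (lt_of_lt_of_le ht (min_le_left _ _))
    exact hd _ hmem _ hmem0 hdist
  obtain ⟨⟨x1, hx1, hfx1⟩, hub1⟩ := hg t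
  obtain ⟨⟨x0, hx0, hfx0⟩, hub0⟩ := hg t₀
  have hfx1' : f x1 t = g t := hfx1
  have hfx0' : f x0 t₀ = g t₀ := hfx0
  have e1 : g t ≤ g t₀ + ε / 2 := by
    have := key x1 hx1
    rw [Real.dist_eq] at this
    have h2 : f x1 t₀ ≤ g t₀ := hub0 ⟨x1, hx1, rfl⟩
    have := abs_lt.1 this
    linarith [this.2]
  have e0 : g t₀ ≤ g t + ε / 2 := by
    have := key x0 hx0
    rw [Real.dist_eq] at this
    have h2 : f x0 t ≤ g t := hub1 ⟨x0, hx0, rfl⟩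
    have := abs_lt.1 this
    linarith [this.1]
  rw [Real.dist_eq, abs_lt]
  constructor <;> linarith

lemma contLeast {f : ℝ → ℝ → ℝ} {a b : ℝ}
    (hf : ContinuousOn (fun p : ℝ × ℝ => f p.1 p.2) (Icc a b ×ˢ univ))
    (g : ℝ → ℝ) (hg : ∀ t, IsLeast ((fun x => f x t) '' Icc a b) (g t)) :
    Continuous g := by
  have hneg : Continuous fun t => -g t := by
    apply contGreatest (f := fun x t => -f x t) (hf.neg) (fun t => -g t)
    intro t
    constructor
    · obtain ⟨x, hx, hfx⟩ := (hg t).1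
      exact ⟨x, hx, by simp [show f x t = g t from hfx]⟩
    · rintro y ⟨x, hx, rfl⟩
      simp only [neg_le_neg_iff]
      exact (hg t).2 ⟨x, hx, rfl⟩
  simpa only [Pi.neg_def, neg_neg] using hneg.neg

lemma gronwallKey {T : ℝ} (hT : 0 < T) (J J' r : ℝ → ℝ)
    (hJpos : ∀ t, 0 < J t) (hJd : ∀ t, HasDerivAt J (J' t) t)
    (hper : J T = J 0) (hr : Continuous r)
    (hle : ∀ t, J' t ≤ r t * J t) : 0 ≤ ∫ t in (0:ℝ)..T, r t := by
  set R : ℝ → ℝ := fun t => ∫ s in (0:ℝ)..t, r s with hR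
  have hRd : ∀ t, HasDerivAt R (r t) t := fun t =>
    integral_hasDerivAt_right (hr.intervalIntegrable _ _)
      hr.aestronglyMeasurable.stronglyMeasurableAtFilter hr.continuousAt
  set H : ℝ → ℝ := fun t => Real.log (J t) - R t with hH
  have hHd : ∀ t, HasDerivAt H (J' t / J t - r t) t := fun t =>
    ((hJd t).log (hJpos t).ne').sub (hRd t)
  have hanti : Antitone H := by
    apply antitone_of_deriv_nonpos (fun t => (hHd t).differentiableAt)
    intro t
    rw [(hHd t).deriv]
    have : J' t / J t ≤ r t := (div_le_iff₀ (hJpos t)).2 (hle t)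
    linarith
  have h0 := hanti hT.le
  have hR0 : R 0 = 0 := integral_same
  simp only [hH, hper, hR0, sub_zero] at h0
  linarith [h0]

lemma wSpec (d α h1 h2 : ℝ) (hd : 0 < d) (hh : h1 < h2) :
    ∃ w w1 w2 : ℝ → ℝ,
      (∀ x, HasDerivAt w (w1 x) x) ∧ (∀ x, HasDerivAt w1 (w2 x) x) ∧
      Continuous w ∧ Continuous w1 ∧ Continuous w2 ∧
      w h1 = 0 ∧ w h2 = 0 ∧ (∀ x ∈ Set.Ioo h1 h2, 0 < w x) ∧
      (∀ x, d * w2 x + α * w1 x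
        = -(d * (Real.pi / (h2 - h1)) ^ 2 + α ^ 2 / (4 * d)) * w x) := by
  have hLpos : 0 < h2 - h1 := sub_pos.2 hh
  set c : ℝ := -(α / (2 * d)) with hc
  set k : ℝ := Real.pi / (h2 - h1) with hk
  have hkpos : 0 < k := div_pos Real.pi_pos hLpos
  have hE : ∀ x : ℝ, HasDerivAt (fun y : ℝ => Real.exp (c * y)) (Real.exp (c * x) * c) x :=
    fun x => by simpa using ((hasDerivAt_id x).const_mul c).exp
  have hS : ∀ x : ℝ, HasDerivAt (fun y : ℝ => Real.sin (k * (y - h1)))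
      (Real.cos (k * (x - h1)) * k) x :=
    fun x => by simpa using (((hasDerivAt_id x).sub_const h1).const_mul k).sin
  have hC : ∀ x : ℝ, HasDerivAt (fun y : ℝ => Real.cos (k * (y - h1)))
      (-Real.sin (k * (x - h1)) * k) x :=
    fun x => by simpa using (((hasDerivAt_id x).sub_const h1).const_mul k).cos
  refine ⟨fun x => Real.exp (c * x) * Real.sin (k * (x - h1)),
    fun x => Real.exp (c * x) * (c * Real.sin (k * (x - h1)) + k * Real.cos (k * (x - h1))),
    fun x => Real.exp (c * x) *
      ((c ^ 2 - k ^ 2) * Real.sin (k * (x - h1)) + 2 * c * k * Real.cos (k * (x - h1))),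
    ?_, ?_, ?_, ?_, ?_, ?_, ?_, ?_, ?_⟩
  · intro x
    have := (hE x).mul (hS x)
    refine this.congr_deriv ?_
    ring
  · intro x
    have := (hE x).mul (((hS x).const_mul c).add ((hC x).const_mul k))
    refine this.congr_deriv ?_
    simp only [Pi.add_apply]
    ring
  · exact (Real.continuous_exp.comp (continuous_const.mul continuous_id)).mul
      (Real.continuous_sin.comp (continuous_const.mul (continuous_id.sub continuous_const)))
  · fun_prop
  · fun_prop
  · simp
  · have : k * (h2 - h1) = Real.pi := by
      rw [hk, div_mul_cancel₀ _ hLpos.ne']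
    simp [this]
  · intro x hx
    have h1' : 0 < k * (x - h1) := mul_pos hkpos (sub_pos.2 hx.1)
    have h2' : k * (x - h1) < Real.pi := by
      have : k * (x - h1) < k * (h2 - h1) := by
        apply mul_lt_mul_of_pos_left _ hkpos
        linarith [hx.2]
      rwa [hk, div_mul_cancel₀ _ hLpos.ne'] at this
    exact mul_pos (Real.exp_pos _) (Real.sin_pos_of_pos_of_lt_pi h1' h2')
  · intro x
    simp only
    rw [hc]
    field_simp
    ring


/-- **Theorem 3.4(2).** The principal eigenvalue `μ0` (the basic reproduction number
`R₀^D`) of the periodic-parabolic problem with heterogeneous coefficients is bounded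
between the explicit values obtained from the spatial extrema of the coefficients:
`(1/T ∫βₘ)/(d(π/L)²+α²/(4d)+1/T ∫γ_M) ≤ μ0 ≤ (1/T ∫β_M)/(d(π/L)²+α²/(4d)+1/T ∫γₘ)`. -/
theorem R0_bounds_by_extrema
    (d α T h1 h2 : ℝ) (hd : 0 < d) (hT : 0 < T) (hh : h1 < h2)
    (L : ℝ) (hL : L = h2 - h1)
    (β γ : ℝ → ℝ → ℝ)
    (hβc : ContinuousOn (fun p : ℝ × ℝ => β p.1 p.2) (Set.Icc h1 h2 ×ˢ Set.univ))
    (hγc : ContinuousOn (fun p : ℝ × ℝ => γ p.1 p.2) (Set.Icc h1 h2 ×ˢ Set.univ))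
    (hβpos : ∀ x ∈ Set.Icc h1 h2, ∀ t : ℝ, 0 < β x t)
    (hγpos : ∀ x ∈ Set.Icc h1 h2, ∀ t : ℝ, 0 < γ x t)
    (hβper : ∀ x t, β x (t + T) = β x t) (hγper : ∀ x t, γ x (t + T) = γ x t)
    -- the spatial extrema of the coefficients
    (βm βM γm γM : ℝ → ℝ)
    (hβm : ∀ t, IsLeast ((fun x => β x t) '' Set.Icc h1 h2) (βm t))
    (hβM : ∀ t, IsGreatest ((fun x => β x t) '' Set.Icc h1 h2) (βM t))
    (hγm : ∀ t, IsLeast ((fun x => γ x t) '' Set.Icc h1 h2) (γm t))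
    (hγM : ∀ t, IsGreatest ((fun x => γ x t) '' Set.Icc h1 h2) (γM t))
    -- the positive T-periodic principal eigenpair (μ0, φ)
    (μ0 : ℝ) (hμ0 : 0 < μ0) (φ : ℝ → ℝ → ℝ)
    (hφper : ∀ x t, φ x (t + T) = φ x t)
    (hφc : ContinuousOn (fun p : ℝ × ℝ => φ p.1 p.2) (Set.Icc h1 h2 ×ˢ Set.univ))
    (hφxc : ContinuousOn (fun p : ℝ × ℝ => pX φ p.1 p.2) (Set.Icc h1 h2 ×ˢ Set.univ))
    (hφxxc : ContinuousOn (fun p : ℝ × ℝ => pXX φ p.1 p.2) (Set.Icc h1 h2 ×ˢ Set.univ))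
    (hφtc : ContinuousOn (fun p : ℝ × ℝ => pT φ p.1 p.2) (Set.Icc h1 h2 ×ˢ Set.univ))
    (hφdiff : ∀ t : ℝ, ∀ x ∈ Set.Icc h1 h2,
      DifferentiableAt ℝ (fun y => φ y t) x ∧
      DifferentiableAt ℝ (fun y => pX φ y t) x ∧
      DifferentiableAt ℝ (fun s => φ x s) t)
    (hφbc : ∀ t : ℝ, φ h1 t = 0 ∧ φ h2 t = 0)
    (hφpos : ∀ t : ℝ, ∀ x ∈ Set.Ioo h1 h2, 0 < φ x t)
    (hφpde : ∀ t : ℝ, ∀ x ∈ Set.Ioo h1 h2,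
      pT φ x t - d * pXX φ x t + α * pX φ x t
        = -γ x t * φ x t + (β x t / μ0) * φ x t) :
    ((1 / T) * ∫ t in (0:ℝ)..T, βm t) /
        (d * (Real.pi / L) ^ 2 + α ^ 2 / (4 * d) + (1 / T) * ∫ t in (0:ℝ)..T, γM t)
      ≤ μ0 ∧
    μ0 ≤ ((1 / T) * ∫ t in (0:ℝ)..T, βM t) /
        (d * (Real.pi / L) ^ 2 + α ^ 2 / (4 * d) + (1 / T) * ∫ t in (0:ℝ)..T, γm t) := by
  subst hL
  obtain ⟨w, w1, w2, hw1, hw2, hwc, hw1c, hw2c, hwh1, hwh2, hwpos, hwpde⟩ :=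
    wSpec d α h1 h2 hd hh
  set lam1 : ℝ := d * (Real.pi / (h2 - h1)) ^ 2 + α ^ 2 / (4 * d) with hlam1
  have hsub : 0 < h2 - h1 := sub_pos.2 hh
  have hlampos : 0 < lam1 := by
    have hq : 0 < Real.pi / (h2 - h1) := div_pos Real.pi_pos hsub
    have h1' : 0 < d * (Real.pi / (h2 - h1)) ^ 2 := mul_pos hd (pow_pos hq 2)
    have h2' : 0 ≤ α ^ 2 / (4 * d) := by positivity
    rw [hlam1]; linarith
  have sliceX : ∀ (f : ℝ → ℝ → ℝ),
      ContinuousOn (fun p : ℝ × ℝ => f p.1 p.2) (Icc h1 h2 ×ˢ univ) →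
      ∀ t : ℝ, ContinuousOn (fun x => f x t) (Icc h1 h2) := by
    intro f hf t
    have : (fun x => f x t) = (fun p : ℝ × ℝ => f p.1 p.2) ∘ (fun x => (x, t)) := rfl
    rw [this]
    exact hf.comp ((continuous_id.prodMk continuous_const).continuousOn)
      (fun x hx => ⟨hx, trivial⟩)
  have integ : ∀ f : ℝ → ℝ, ContinuousOn f (Icc h1 h2) → IntervalIntegrable f volume h1 h2 :=
    fun f hf => (by rwa [uIcc_of_le hh.le] : ContinuousOn f (uIcc h1 h2)).intervalIntegrable
  have hφ0 : ∀ t : ℝ, ∀ x ∈ Icc h1 h2, 0 ≤ φ x t := by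
    intro t x hx
    rcases eq_or_lt_of_le hx.1 with h | h
    · rw [← h]; exact le_of_eq ((hφbc t).1).symm
    rcases eq_or_lt_of_le hx.2 with h' | h'
    · rw [h']; exact le_of_eq ((hφbc t).2).symm
    · exact (hφpos t x ⟨h, h'⟩).le
  have hw0 : ∀ x ∈ Icc h1 h2, 0 ≤ w x := by
    intro x hx
    rcases eq_or_lt_of_le hx.1 with h | h
    · rw [← h]; exact le_of_eq hwh1.symm
    rcases eq_or_lt_of_le hx.2 with h' | h'
    · rw [h']; exact le_of_eq hwh2.symm
    · exact (hwpos x ⟨h, h'⟩).le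
  set J : ℝ → ℝ := fun t => ∫ x in h1..h2, φ x t * w x with hJ
  set J' : ℝ → ℝ := fun t => ∫ x in h1..h2, pT φ x t * w x with hJ'
  have hJint : ∀ t, IntervalIntegrable (fun x => φ x t * w x) volume h1 h2 :=
    fun t => integ _ ((sliceX φ hφc t).mul hwc.continuousOn)
  have hJpos : ∀ t, 0 < J t := fun t =>
    intervalIntegral_pos_of_pos_on (hJint t)
      (fun x hx => mul_pos (hφpos t x hx) (hwpos x hx)) hh
  have hJper : J T = J 0 := by
    apply integral_congr
    intro x _
    simp only
    rw [show φ x T = φ x 0 from by simpa using hφper x 0]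
  have hJd : ∀ t, HasDerivAt J (J' t) t := by
    intro t₀
    have hKc : IsCompact (Icc h1 h2 ×ˢ Icc (t₀ - 1) (t₀ + 1)) :=
      isCompact_Icc.prod isCompact_Icc
    obtain ⟨C, hC⟩ := hKc.exists_bound_of_continuousOn
      ((hφtc.mono (fun p hp => ⟨hp.1, trivial⟩)).mul
        ((hwc.comp continuous_fst).continuousOn))
    have main := intervalIntegral.hasDerivAt_integral_of_dominated_loc_of_deriv_le
      (F := fun t x => φ x t * w x) (F' := fun t x => pT φ x t * w x) (x₀ := t₀)
      (bound := fun _ => C) (a := h1) (b := h2) (μ := volume) (Metric.ball_mem_nhds t₀ one_pos)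
      (Filter.Eventually.of_forall fun t =>
        (((sliceX φ hφc t).mul hwc.continuousOn).mono
          (by rw [uIoc_of_le hh.le]; exact Ioc_subset_Icc_self)).aestronglyMeasurable
          measurableSet_uIoc)
      (hJint t₀)
      ((((sliceX (fun x t => pT φ x t) hφtc t₀).mul hwc.continuousOn).mono
          (by rw [uIoc_of_le hh.le]; exact Ioc_subset_Icc_self)).aestronglyMeasurable
          measurableSet_uIoc)
      (Filter.Eventually.of_forall ?_)
      intervalIntegrable_const
      (Filter.Eventually.of_forall ?_)
    · exact main.2
    · intro x hx t ht
      have hx' : x ∈ Icc h1 h2 := Ioc_subset_Icc_self (by rwa [uIoc_of_le hh.le] at hx)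
      have ht' : t ∈ Icc (t₀ - 1) (t₀ + 1) := by
        rw [Metric.mem_ball, Real.dist_eq] at ht
        constructor <;> linarith [abs_lt.1 ht]
      exact hC (x, t) ⟨hx', ht'⟩
    · intro x hx t ht
      have hx' : x ∈ Icc h1 h2 := Ioc_subset_Icc_self (by rwa [uIoc_of_le hh.le] at hx)
      exact ((hφdiff t x hx').2.2.hasDerivAt).mul_const (w x)
  -- the derivative identity for J'
  have hform : ∀ t, J' t = -lam1 * J t +
      ∫ x in h1..h2, (β x t / μ0 - γ x t) * (φ x t * w x) := by
    intro t
    have hxder : ∀ x ∈ uIcc h1 h2, HasDerivAt (fun y => φ y t) (pX φ x t) x := by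
      intro x hx
      rw [uIcc_of_le hh.le] at hx
      exact (hφdiff t x hx).1.hasDerivAt
    have hxxder : ∀ x ∈ uIcc h1 h2, HasDerivAt (fun y => pX φ y t) (pXX φ x t) x := by
      intro x hx
      rw [uIcc_of_le hh.le] at hx
      exact (hφdiff t x hx).2.1.hasDerivAt
    have hwder : ∀ x ∈ uIcc h1 h2, HasDerivAt w (w1 x) x := fun x _ => hw1 x
    have hw1der : ∀ x ∈ uIcc h1 h2, HasDerivAt w1 (w2 x) x := fun x _ => hw2 x
    have ipXX : IntervalIntegrable (fun x => pXX φ x t) volume h1 h2 :=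
      integ _ (sliceX _ hφxxc t)
    have ipX : IntervalIntegrable (fun x => pX φ x t) volume h1 h2 :=
      integ _ (sliceX _ hφxc t)
    have iw1 : IntervalIntegrable w1 volume h1 h2 := hw1c.intervalIntegrable _ _
    have iw2 : IntervalIntegrable w2 volume h1 h2 := hw2c.intervalIntegrable _ _
    have iA : IntervalIntegrable (fun x => pXX φ x t * w x) volume h1 h2 :=
      integ _ ((sliceX _ hφxxc t).mul hwc.continuousOn)
    have iB : IntervalIntegrable (fun x => pX φ x t * w1 x) volume h1 h2 :=
      integ _ ((sliceX _ hφxc t).mul hw1c.continuousOn)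
    have iCw : IntervalIntegrable (fun x => pX φ x t * w x) volume h1 h2 :=
      integ _ ((sliceX _ hφxc t).mul hwc.continuousOn)
    have iD : IntervalIntegrable (fun x => φ x t * w1 x) volume h1 h2 :=
      integ _ ((sliceX φ hφc t).mul hw1c.continuousOn)
    have iE : IntervalIntegrable (fun x => φ x t * w2 x) volume h1 h2 :=
      integ _ ((sliceX φ hφc t).mul hw2c.continuousOn)
    have iR : IntervalIntegrable (fun x => (β x t / μ0 - γ x t) * (φ x t * w x)) volume h1 h2 :=
      integ _ ((((sliceX β hβc t).div_const μ0).sub (sliceX γ hγc t)).mul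
        ((sliceX φ hφc t).mul hwc.continuousOn))
    have I1 := integral_deriv_mul_eq_sub hxxder hwder ipXX iw1
    have I2 := integral_deriv_mul_eq_sub hxder hw1der ipX iw2
    have I3 := integral_deriv_mul_eq_sub hxder hwder ipX iw1
    have e1 : (∫ x in h1..h2, pXX φ x t * w x) + ∫ x in h1..h2, pX φ x t * w1 x = 0 := by
      rw [← integral_add iA iB, I1, hwh1, hwh2]; ring
    have e2 : (∫ x in h1..h2, pX φ x t * w1 x) + ∫ x in h1..h2, φ x t * w2 x = 0 := by
      rw [← integral_add iB iE, I2, (hφbc t).1, (hφbc t).2]; ring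
    have e3 : (∫ x in h1..h2, pX φ x t * w x) + ∫ x in h1..h2, φ x t * w1 x = 0 := by
      rw [← integral_add iCw iD, I3, (hφbc t).1, (hφbc t).2]; ring
    have h2ae : ∀ᵐ x : ℝ, x ≠ h2 := by
      refine MeasureTheory.ae_iff.2 ?_
      simp only [not_not, Set.setOf_eq_eq_singleton]
      exact measure_singleton h2
    have key1 : J' t = d * (∫ x in h1..h2, pXX φ x t * w x)
        - α * (∫ x in h1..h2, pX φ x t * w x)
        + ∫ x in h1..h2, (β x t / μ0 - γ x t) * (φ x t * w x) := by
      have step1 : J' t = ∫ x in h1..h2,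
          (d * (pXX φ x t * w x) - α * (pX φ x t * w x)
            + (β x t / μ0 - γ x t) * (φ x t * w x)) := by
        simp only [hJ']
        apply integral_congr_ae'
        · filter_upwards [h2ae] with x hne hx
          have hxIoo : x ∈ Ioo h1 h2 := ⟨hx.1, lt_of_le_of_ne hx.2 hne⟩
          have hp := hφpde t x hxIoo
          linear_combination w x * hp
        · refine Filter.Eventually.of_forall fun x hx => absurd hx ?_
          rw [Ioc_eq_empty (not_lt.2 hh.le)]
          exact notMem_empty x
      rw [step1, integral_add (((iA.const_mul d).sub (iCw.const_mul α))) iR,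
        integral_sub (iA.const_mul d) (iCw.const_mul α),
        intervalIntegral.integral_const_mul, intervalIntegral.integral_const_mul]
    have key2 : d * (∫ x in h1..h2, φ x t * w2 x) + α * (∫ x in h1..h2, φ x t * w1 x)
        = -lam1 * J t := by
      rw [← intervalIntegral.integral_const_mul, ← intervalIntegral.integral_const_mul,
        ← integral_add (iE.const_mul d) (iD.const_mul α)]
      have : J t = ∫ x in h1..h2, φ x t * w x := rfl
      rw [this, ← intervalIntegral.integral_const_mul]
      apply integral_congr
      intro x _
      simp only
      linear_combination φ x t * hwpde x
    rw [key1]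
    have S1 : (∫ x in h1..h2, pXX φ x t * w x) = ∫ x in h1..h2, φ x t * w2 x := by
      linarith
    have S2 : (∫ x in h1..h2, pX φ x t * w x) = -(∫ x in h1..h2, φ x t * w1 x) := by
      linarith
    rw [S1, S2]
    linear_combination key2
  -- continuity of the extrema functions
  have hβMc : Continuous βM := contGreatest hβc βM hβM
  have hγMc : Continuous γM := contGreatest hγc γM hγM
  have hβmc : Continuous βm := contLeast hβc βm hβm
  have hγmc : Continuous γm := contLeast hγc γm hγm
  -- pointwise integrand comparison
  have hcompare : ∀ t, ∀ x ∈ Icc h1 h2,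
      (βm t / μ0 - γM t) * (φ x t * w x) ≤ (β x t / μ0 - γ x t) * (φ x t * w x) ∧
      (β x t / μ0 - γ x t) * (φ x t * w x) ≤ (βM t / μ0 - γm t) * (φ x t * w x) := by
    intro t x hx
    have hφw : 0 ≤ φ x t * w x := mul_nonneg (hφ0 t x hx) (hw0 x hx)
    have hb1 : βm t ≤ β x t := (hβm t).2 ⟨x, hx, rfl⟩
    have hb2 : β x t ≤ βM t := (hβM t).2 ⟨x, hx, rfl⟩
    have hg1 : γm t ≤ γ x t := (hγm t).2 ⟨x, hx, rfl⟩
    have hg2 : γ x t ≤ γM t := (hγM t).2 ⟨x, hx, rfl⟩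
    have hd1 : βm t / μ0 ≤ β x t / μ0 := by gcongr
    have hd2 : β x t / μ0 ≤ βM t / μ0 := by gcongr
    constructor
    · apply mul_le_mul_of_nonneg_right _ hφw
      linarith
    · apply mul_le_mul_of_nonneg_right _ hφw
      linarith
  have iRt : ∀ t, IntervalIntegrable (fun x => (β x t / μ0 - γ x t) * (φ x t * w x))
      volume h1 h2 := fun t =>
    integ _ ((((sliceX β hβc t).div_const μ0).sub (sliceX γ hγc t)).mul
      ((sliceX φ hφc t).mul hwc.continuousOn))
  have iConst : ∀ c : ℝ, ∀ t : ℝ, IntervalIntegrable (fun x => c * (φ x t * w x))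
      volume h1 h2 := fun c t =>
    integ _ (continuousOn_const.mul ((sliceX φ hφc t).mul hwc.continuousOn))
  have hupper : ∀ t, J' t ≤ (βM t / μ0 - γm t - lam1) * J t := by
    intro t
    rw [hform t]
    have hmono : (∫ x in h1..h2, (β x t / μ0 - γ x t) * (φ x t * w x))
        ≤ ∫ x in h1..h2, (βM t / μ0 - γm t) * (φ x t * w x) :=
      integral_mono_on hh.le (iRt t) (iConst _ t) (fun x hx => (hcompare t x hx).2)
    have hc2 : (∫ x in h1..h2, (βM t / μ0 - γm t) * (φ x t * w x))
        = (βM t / μ0 - γm t) * J t := integral_const_mul _ _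
    nlinarith [hmono, hc2]
  have hlower : ∀ t, (βm t / μ0 - γM t - lam1) * J t ≤ J' t := by
    intro t
    rw [hform t]
    have hmono : (∫ x in h1..h2, (βm t / μ0 - γM t) * (φ x t * w x))
        ≤ ∫ x in h1..h2, (β x t / μ0 - γ x t) * (φ x t * w x) :=
      integral_mono_on hh.le (iConst _ t) (iRt t) (fun x hx => (hcompare t x hx).1)
    have hc2 : (∫ x in h1..h2, (βm t / μ0 - γM t) * (φ x t * w x))
        = (βm t / μ0 - γM t) * J t := integral_const_mul _ _
    nlinarith [hmono, hc2]
  -- apply the Gronwall-type lemma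
  have hrMc : Continuous (fun t => βM t / μ0 - γm t - lam1) :=
    ((hβMc.div_const μ0).sub hγmc).sub continuous_const
  have hrmc : Continuous (fun t => βm t / μ0 - γM t - lam1) :=
    ((hβmc.div_const μ0).sub hγMc).sub continuous_const
  have up : 0 ≤ ∫ t in (0:ℝ)..T, (βM t / μ0 - γm t - lam1) :=
    gronwallKey hT J J' _ hJpos hJd hJper hrMc hupper
  have lowflip : 0 ≤ ∫ t in (0:ℝ)..T, -(βm t / μ0 - γM t - lam1) := by
    apply gronwallKey hT (fun t => (J t)⁻¹) (fun t => -J' t / J t ^ 2) _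
      (fun t => inv_pos.2 (hJpos t)) (fun t => (hJd t).inv (hJpos t).ne')
      (by simp only [hJper]) hrmc.neg
    intro t
    have hJt := hJpos t
    have h := hlower t
    rw [div_le_iff₀ (pow_pos hJt 2)]
    have hinv : (J t)⁻¹ * J t ^ 2 = J t := by
      field_simp
    rw [mul_assoc, hinv]
    simp only [Pi.neg_apply]
    linarith
  have low : (∫ t in (0:ℝ)..T, (βm t / μ0 - γM t - lam1)) ≤ 0 := by
    rw [intervalIntegral.integral_neg] at lowflip
    linarith
  -- expand the integrals
  have expand : ∀ u v : ℝ → ℝ, Continuous u → Continuous v →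
      (∫ t in (0:ℝ)..T, (u t / μ0 - v t - lam1))
        = (∫ t in (0:ℝ)..T, u t) / μ0 - (∫ t in (0:ℝ)..T, v t) - T * lam1 := by
    intro u v hu hv
    rw [integral_sub (f := fun t => u t / μ0 - v t) (((hu.div_const μ0).sub hv).intervalIntegrable _ _)
        (continuous_const.intervalIntegrable _ _),
      integral_sub ((hu.div_const μ0).intervalIntegrable _ _) (hv.intervalIntegrable _ _),
      intervalIntegral.integral_div, intervalIntegral.integral_const]
    simp [smul_eq_mul]
  rw [expand βM γm hβMc hγmc] at up
  rw [expand βm γM hβmc hγMc] at low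
  -- nonnegativity of the integrals of the extrema
  have hGm0 : 0 ≤ ∫ t in (0:ℝ)..T, γm t := by
    apply integral_nonneg hT.le
    intro u _
    obtain ⟨x, hx, he⟩ := (hγm u).1
    have : γ x u = γm u := he
    linarith [hγpos x hx u]
  have hGM0 : 0 ≤ ∫ t in (0:ℝ)..T, γM t := by
    apply integral_nonneg hT.le
    intro u _
    obtain ⟨x, hx, he⟩ := (hγM u).1
    have : γ x u = γM u := he
    linarith [hγpos x hx u]
  constructor
  · -- lower bound
    have hD : 0 < lam1 + 1 / T * ∫ t in (0:ℝ)..T, γM t :=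
      add_pos_of_pos_of_nonneg hlampos (mul_nonneg (by positivity) hGM0)
    rw [div_le_iff₀ hD]
    have hmain : (∫ t in (0:ℝ)..T, βm t)
        ≤ ((∫ t in (0:ℝ)..T, γM t) + T * lam1) * μ0 := by
      have := (div_le_iff₀ hμ0).1 (show (∫ t in (0:ℝ)..T, βm t) / μ0
          ≤ (∫ t in (0:ℝ)..T, γM t) + T * lam1 by linarith)
      linarith
    rw [← mul_le_mul_iff_of_pos_right hT]
    have e1 : 1 / T * (∫ t in (0:ℝ)..T, βm t) * T = ∫ t in (0:ℝ)..T, βm t := by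
      field_simp
    have e2 : μ0 * (lam1 + 1 / T * ∫ t in (0:ℝ)..T, γM t) * T
        = ((∫ t in (0:ℝ)..T, γM t) + T * lam1) * μ0 := by
      field_simp
      ring
    rw [e1, e2]
    exact hmain
  · -- upper bound
    have hD : 0 < lam1 + 1 / T * ∫ t in (0:ℝ)..T, γm t :=
      add_pos_of_pos_of_nonneg hlampos (mul_nonneg (by positivity) hGm0)
    rw [le_div_iff₀ hD]
    have hmain : ((∫ t in (0:ℝ)..T, γm t) + T * lam1) * μ0
        ≤ ∫ t in (0:ℝ)..T, βM t := by
      have := (le_div_iff₀ hμ0).1 (show (∫ t in (0:ℝ)..T, γm t) + T * lam1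
          ≤ (∫ t in (0:ℝ)..T, βM t) / μ0 by linarith)
      linarith
    rw [← mul_le_mul_iff_of_pos_right hT]
    have e1 : 1 / T * (∫ t in (0:ℝ)..T, βM t) * T = ∫ t in (0:ℝ)..T, βM t := by
      field_simp
    have e2 : μ0 * (lam1 + 1 / T * ∫ t in (0:ℝ)..T, γm t) * T
        = ((∫ t in (0:ℝ)..T, γm t) + T * lam1) * μ0 := by
      field_simp
      ring
    rw [e2, e1]
    exact hmain
end

section
/- (Persistence when the eigenvalue is negative; Theorem 4.2 restated.) Let (I;g,h) be a solution of the free boundary problem, and let t1≥0. Suppose there exist λ0<0 and ψ:[g(t1),h(t1)]×ℝ→ℝ, T-periodic in t, continuous together with ψ_t,ψ_x,ψ_xx, with ψ(g(t1),t)=ψ(h(t1),t)=0, 0<ψ(x,t)≤1 for x∈(g(t1),h(t1)), satisfying ψ_t−dψ_xx+αψ_x=(β(x,t)−γ(x,t))ψ+λ0ψ on (g(t1),h(t1))×ℝ. Suppose further δ>0 satisfies δ≤N*·(−λ0)/β̄ where β̄=max_{[g(t1),h(t1)]×[0,T]}β(x,t), and δψ(x,t1)≤I(x,t1) for all x∈[g(t1),h(t1)].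 Then I(x,t)≥δψ(x,t) for all x∈[g(t1),h(t1)] and all t≥t1; in particular, liminf_{t→∞} max_{x∈[g(t1),h(t1)]}I(x,t) ≥ δ·liminf_{t→∞}max_xψ(x,t) > 0, so the disease persists (vanishing does not occur). -/
/-- Solution of the free boundary problem (FBP) on [0,∞), with `I` nonnegative. -/
structure IsFBPSol (d α μ Nstar h0 : ℝ) (β γ : ℝ → ℝ → ℝ) (I0 : ℝ → ℝ)
    (I : ℝ → ℝ → ℝ) (g h : ℝ → ℝ) : Prop where
  hg0 : g 0 = -h0
  hh0 : h 0 = h0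
  hgh : ∀ t ≥ (0:ℝ), g t < h t
  hgC1 : ContDiffOn ℝ 1 g (Set.Ici 0)
  hhC1 : ContDiffOn ℝ 1 h (Set.Ici 0)
  hgmono : AntitoneOn g (Set.Ici 0)
  hhmono : MonotoneOn h (Set.Ici 0)
  hIcont : ContinuousOn (fun p : ℝ × ℝ => I p.1 p.2)
      {p : ℝ × ℝ | 0 ≤ p.2 ∧ g p.2 ≤ p.1 ∧ p.1 ≤ h p.2}
  hInonneg : ∀ t ≥ (0:ℝ), ∀ x ∈ Set.Icc (g t) (h t), 0 ≤ I x t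
  hIx : ∀ t > (0:ℝ), ∀ x ∈ Set.Icc (g t) (h t), DifferentiableAt ℝ (fun y => I y t) x
  hIxcont : ∀ t > (0:ℝ), ContinuousOn (fun y => pX I y t) (Set.Icc (g t) (h t))
  hIxx : ∀ t > (0:ℝ), ∀ x ∈ Set.Ioo (g t) (h t), DifferentiableAt ℝ (fun y => pX I y t) x
  hIt : ∀ t > (0:ℝ), ∀ x ∈ Set.Ioo (g t) (h t), DifferentiableAt ℝ (fun s => I x s) t
  hpde : ∀ t > (0:ℝ), ∀ x ∈ Set.Ioo (g t) (h t),
      pT I x t - d * pXX I x t + α * pX I x t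
        = (β x t - γ x t) * I x t - (β x t / Nstar) * (I x t) ^ 2
  hIg : ∀ t > (0:ℝ), I (g t) t = 0
  hIh : ∀ t > (0:ℝ), I (h t) t = 0
  hstefg : ∀ t > (0:ℝ), deriv g t = -μ * pX I (g t) t
  hstefh : ∀ t > (0:ℝ), deriv h t = -μ * pX I (h t) t
  hinit : ∀ x ∈ Set.Icc (-h0) h0, I x 0 = I0 x


open Set Filter Topology

lemma deriv_nonpos_of_min_left {f : ℝ → ℝ} {a t0 : ℝ} (hat : a < t0)
    (hd : DifferentiableAt ℝ f t0) (hmin : ∀ s ∈ Set.Icc a t0, f t0 ≤ f s) :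
    deriv f t0 ≤ 0 := by
  have hder : Tendsto (slope f t0) (𝓝[<] t0) (𝓝 (deriv f t0)) :=
    (hasDerivAt_iff_tendsto_slope.1 hd.hasDerivAt).mono_left
      (nhdsWithin_mono _ (fun x hx => ne_of_lt hx))
  refine le_of_tendsto hder ?_
  filter_upwards [Ioo_mem_nhdsLT_of_mem ⟨hat, le_refl t0⟩] with s hs
  have h1 : f t0 ≤ f s := hmin s ⟨hs.1.le, hs.2.le⟩
  have h2 : s - t0 < 0 := by linarith [hs.2]
  rw [slope_def_field]
  exact div_nonpos_of_nonneg_of_nonpos (by linarith) h2.le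

lemma second_deriv_test {f f' : ℝ → ℝ} {a b x0 : ℝ} (hx : x0 ∈ Set.Ioo a b)
    (hf : ∀ x ∈ Set.Ioo a b, HasDerivAt f (f' x) x)
    (hf' : DifferentiableAt ℝ f' x0)
    (hmin : ∀ x ∈ Set.Ioo a b, f x0 ≤ f x) :
    f' x0 = 0 ∧ 0 ≤ deriv f' x0 := by
  have hloc : IsLocalMin f x0 := by
    have : Set.Ioo a b ∈ 𝓝 x0 := isOpen_Ioo.mem_nhds hx
    filter_upwards [this] with y hy using hmin y hy
  have hf'0 : f' x0 = 0 := by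
    have := hloc.deriv_eq_zero
    rwa [(hf x0 hx).deriv] at this
  refine ⟨hf'0, ?_⟩
  by_contra hL
  push_neg at hL
  set L := deriv f' x0 with hLdef
  have hder : Tendsto (slope f' x0) (𝓝[>] x0) (𝓝 L) :=
    (hasDerivAt_iff_tendsto_slope.1 hf'.hasDerivAt).mono_left
      (nhdsWithin_mono _ (fun x hx => ne_of_gt hx))
  have hev : ∀ᶠ x in 𝓝[>] x0, slope f' x0 x < L / 2 :=
    hder.eventually_lt_const (by linarith)
  obtain ⟨c, hc, hsub⟩ := mem_nhdsGT_iff_exists_Ioc_subset.1 hev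
  -- shrink c so that Icc x0 c' ⊆ Ioo a b
  set c' := min c ((x0 + b) / 2) with hc'def
  have hc'1 : x0 < c' := lt_min hc (by linarith [hx.2])
  have hc'2 : c' < b := (min_le_right _ _).trans_lt (by linarith [hx.2])
  have hIccsub : Set.Icc x0 c' ⊆ Set.Ioo a b := fun y hy =>
    ⟨lt_of_lt_of_le hx.1 hy.1, lt_of_le_of_lt hy.2 hc'2⟩
  have hneg : ∀ y ∈ Set.Ioo x0 c', f' y < 0 := by
    intro y hy
    have hmem : y ∈ Set.Ioc x0 c := ⟨hy.1, hy.2.le.trans (min_le_left _ _)⟩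
    have := hsub hmem
    rw [Set.mem_setOf_eq, slope_def_field, hf'0] at this
    have hypos : 0 < y - x0 := by linarith [hy.1]
    have h3 : f' y - 0 < L / 2 * (y - x0) := (div_lt_iff₀ hypos).1 this
    nlinarith
  have hanti : StrictAntiOn f (Set.Icc x0 c') := by
    refine strictAntiOn_of_deriv_neg (convex_Icc _ _) ?_ ?_
    · exact fun y hy => ((hf y (hIccsub hy)).differentiableAt.continuousAt).continuousWithinAt
    · intro y hy
      rw [interior_Icc] at hy
      rw [(hf y (hIccsub (Set.mem_Icc_of_Ioo hy))).deriv]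
      exact hneg y hy
  have : f c' < f x0 := hanti (Set.left_mem_Icc.2 hc'1.le) (Set.right_mem_Icc.2 hc'1.le) hc'1
  exact absurd (hmin c' (hIccsub (Set.right_mem_Icc.2 hc'1.le))) (by linarith)

lemma periodic_reduce {f : ℝ → ℝ} {T : ℝ} (hT : 0 < T) (hf : Function.Periodic f T) (t : ℝ) :
    ∃ s ∈ Set.Icc (0:ℝ) T, f s = f t := by
  refine ⟨T * Int.fract (t / T), ⟨mul_nonneg hT.le (Int.fract_nonneg _),
    by nlinarith [(Int.fract_lt_one (t / T)).le, Int.fract_nonneg (t / T)]⟩, ?_⟩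
  have h2 : T * Int.fract (t / T) = t - (⌊t / T⌋ : ℤ) * T := by
    rw [Int.fract]; field_simp
  rw [h2]
  exact hf.sub_int_mul_eq ⌊t / T⌋

-- compactness of the time-varying region via parametrization
lemma region_compact {g h : ℝ → ℝ} {t2 : ℝ}
    (hg : ContinuousOn g (Set.Icc 0 t2)) (hh : ContinuousOn h (Set.Icc 0 t2))
    (hgh : ∀ t ∈ Set.Icc (0:ℝ) t2, g t < h t) :
    IsCompact {p : ℝ × ℝ | p.2 ∈ Set.Icc 0 t2 ∧ p.1 ∈ Set.Icc (g p.2) (h p.2)} := by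
  have heq : {p : ℝ × ℝ | p.2 ∈ Set.Icc 0 t2 ∧ p.1 ∈ Set.Icc (g p.2) (h p.2)} =
      (fun q : ℝ × ℝ => (g q.2 + q.1 * (h q.2 - g q.2), q.2)) ''
        (Set.Icc (0:ℝ) 1 ×ˢ Set.Icc (0:ℝ) t2) := by
    ext ⟨x, t⟩
    simp only [Set.mem_setOf_eq, Set.mem_image, Set.mem_prod, Set.mem_Icc, Prod.mk.injEq,
      Prod.exists]
    constructor
    · rintro ⟨⟨ht0, htt⟩, hx1, hx2⟩
      have hD : 0 < h t - g t := by have := hgh t ⟨ht0, htt⟩; linarith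
      refine ⟨(x - g t)/(h t - g t), t,
        ⟨⟨div_nonneg (by linarith) hD.le, (div_le_one hD).2 (by linarith)⟩, ht0, htt⟩, ?_, rfl⟩
      rw [div_mul_cancel₀ _ hD.ne']; ring
    · rintro ⟨s, u, ⟨⟨hs0, hs1⟩, hu⟩, hxeq, hueq⟩
      subst hueq
      have hD : 0 ≤ h u - g u := by have := hgh u hu; linarith
      refine ⟨hu, ?_, ?_⟩ <;> rw [← hxeq] <;> nlinarith
  rw [heq]
  apply (isCompact_Icc.prod isCompact_Icc).image_of_continuousOn
  have hsub : ∀ q : ℝ × ℝ, q ∈ Set.Icc (0:ℝ) 1 ×ˢ Set.Icc (0:ℝ) t2 → q.2 ∈ Set.Icc (0:ℝ) t2 :=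
    fun q hq => hq.2
  have hgc : ContinuousOn (fun q : ℝ × ℝ => g q.2) (Set.Icc (0:ℝ) 1 ×ˢ Set.Icc (0:ℝ) t2) :=
    hg.comp continuous_snd.continuousOn hsub
  have hhc : ContinuousOn (fun q : ℝ × ℝ => h q.2) (Set.Icc (0:ℝ) 1 ×ˢ Set.Icc (0:ℝ) t2) :=
    hh.comp continuous_snd.continuousOn hsub
  exact (hgc.add (continuous_fst.continuousOn.mul (hhc.sub hgc))).prodMk
    continuous_snd.continuousOn
-- upper bound I ≤ Nstar
lemma I_le_Nstar (d α Nstar : ℝ) (β γ : ℝ → ℝ → ℝ)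
    (I : ℝ → ℝ → ℝ) (g h : ℝ → ℝ) (hd : 0 < d) (hN : 0 < Nstar)
    (β1 γ1 : ℝ) (hβ1 : 0 < β1) (hγ1 : 0 < γ1)
    (hβlb : ∀ x t, 0 ≤ t → β1 ≤ β x t) (hγlb : ∀ x t, 0 ≤ t → γ1 ≤ γ x t)
    (hgh : ∀ t ≥ (0:ℝ), g t < h t)
    (hgC : ContinuousOn g (Set.Ici 0)) (hhC : ContinuousOn h (Set.Ici 0))
    (hIcont : ContinuousOn (fun p : ℝ × ℝ => I p.1 p.2)
      {p : ℝ × ℝ | 0 ≤ p.2 ∧ g p.2 ≤ p.1 ∧ p.1 ≤ h p.2})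
    (hIx : ∀ t > (0:ℝ), ∀ x ∈ Set.Icc (g t) (h t), DifferentiableAt ℝ (fun y => I y t) x)
    (hIxx : ∀ t > (0:ℝ), ∀ x ∈ Set.Ioo (g t) (h t), DifferentiableAt ℝ (fun y => pX I y t) x)
    (hIt : ∀ t > (0:ℝ), ∀ x ∈ Set.Ioo (g t) (h t), DifferentiableAt ℝ (fun s => I x s) t)
    (hpde : ∀ t > (0:ℝ), ∀ x ∈ Set.Ioo (g t) (h t),
      pT I x t - d * pXX I x t + α * pX I x t
        = (β x t - γ x t) * I x t - (β x t / Nstar) * (I x t) ^ 2)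
    (hIg : ∀ t > (0:ℝ), I (g t) t = 0)
    (hIh : ∀ t > (0:ℝ), I (h t) t = 0)
    (hinit : ∀ x ∈ Set.Icc (g 0) (h 0), I x 0 ≤ Nstar) :
    ∀ t ≥ (0:ℝ), ∀ x ∈ Set.Icc (g t) (h t), I x t ≤ Nstar := by
  intro t2 ht2 x hx
  set R := {p : ℝ × ℝ | p.2 ∈ Set.Icc 0 t2 ∧ p.1 ∈ Set.Icc (g p.2) (h p.2)} with hRdef
  have hRsub : R ⊆ {p : ℝ × ℝ | 0 ≤ p.2 ∧ g p.2 ≤ p.1 ∧ p.1 ≤ h p.2} :=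
    fun p hp => ⟨hp.1.1, hp.2.1, hp.2.2⟩
  have hRc : IsCompact R := region_compact (hgC.mono (fun s hs => hs.1))
    (hhC.mono (fun s hs => hs.1)) (fun t ht => hgh t ht.1)
  have hRne : R.Nonempty := ⟨(x, t2), ⟨⟨ht2, le_refl _⟩, hx⟩⟩
  set G : ℝ × ℝ → ℝ := fun p => Real.exp (-p.2) * (Nstar - I p.1 p.2) with hGdef
  have hGc : ContinuousOn G R := by
    apply ContinuousOn.mul
    · exact (Real.continuous_exp.comp continuous_snd.neg).continuousOn
    · exact continuousOn_const.sub (hIcont.mono hRsub)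
  obtain ⟨p0, hp0R, hp0min⟩ := hRc.exists_isMinOn hRne hGc
  have hmin : ∀ p ∈ R, G p0 ≤ G p := fun p hp => hp0min hp
  rcases le_or_gt 0 (G p0) with hsign | hsign
  · -- min nonneg : done
    have hx2 : G (x, t2) ≥ 0 := le_trans hsign (hmin (x, t2) ⟨⟨ht2, le_refl _⟩, hx⟩)
    have he := Real.exp_pos (-t2)
    by_contra hc; push_neg at hc
    have : G (x, t2) < 0 := mul_neg_of_pos_of_neg he (by simpa using sub_neg.2 hc)
    linarith
  · exfalso
    obtain ⟨x0, t0⟩ := p0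
    have hp0R' : t0 ∈ Set.Icc 0 t2 ∧ x0 ∈ Set.Icc (g t0) (h t0) := hp0R
    obtain ⟨⟨ht00, ht02⟩, hx0g, hx0h⟩ := hp0R'
    have hmin' : ∀ p : ℝ × ℝ, p ∈ R → Real.exp (-t0) * (Nstar - I x0 t0) ≤ G p :=
      fun p hp => hmin p hp
    have he0 := Real.exp_pos (-t0)
    have hHv : I x0 t0 > Nstar := by
      by_contra hc; push_neg at hc
      exact absurd (mul_nonneg he0.le (by linarith)) (not_le.2 hsign)
    -- t0 > 0
    have ht0pos : 0 < t0 := by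
      rcases ht00.lt_or_eq with hlt | heq
      · exact hlt
      · exfalso
        have : I x0 0 ≤ Nstar := hinit x0 (by rw [← heq] at hx0g hx0h; exact ⟨hx0g, hx0h⟩)
        rw [heq] at this; linarith
    -- x0 interior
    have hx0g' : g t0 < x0 := by
      rcases hx0g.lt_or_eq with hlt | heq
      · exact hlt
      · exfalso; rw [← heq, hIg t0 ht0pos] at hHv; linarith
    have hx0h' : x0 < h t0 := by
      rcases hx0h.lt_or_eq with hlt | heq
      · exact hlt
      · exfalso; rw [heq, hIh t0 ht0pos] at hHv; linarith
    have hx0mem : x0 ∈ Set.Ioo (g t0) (h t0) := ⟨hx0g', hx0h'⟩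
    -- space derivatives
    have hsd := second_deriv_test (f := fun y => Nstar - I y t0)
      (f' := fun y => -pX I y t0) hx0mem
      (fun y hy => ((hIx t0 ht0pos y ⟨hy.1.le, hy.2.le⟩).hasDerivAt).const_sub Nstar)
      (hIxx t0 ht0pos x0 hx0mem).neg
      (by
        intro y hy
        have h1 : Real.exp (-t0) * (Nstar - I x0 t0) ≤ Real.exp (-t0) * (Nstar - I y t0) :=
          hmin' (y, t0) ⟨⟨ht00, ht02⟩, hy.1.le, hy.2.le⟩
        exact (mul_le_mul_iff_right₀ he0).1 h1)
    have hpX0 : pX I x0 t0 = 0 := by have := hsd.1; simpa [neg_eq_zero] using this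
    have hpXX0 : pXX I x0 t0 ≤ 0 := by
      have h2 := hsd.2
      rw [deriv.fun_neg] at h2
      have : -pXX I x0 t0 ≥ 0 := h2
      linarith
    -- time derivative
    have hgc : ContinuousAt g t0 := hgC.continuousAt (Ici_mem_nhds ht0pos)
    have hhc : ContinuousAt h t0 := hhC.continuousAt (Ici_mem_nhds ht0pos)
    have hev : ∀ᶠ s in 𝓝 t0, g s < x0 ∧ x0 < h s ∧ 0 < s := by
      filter_upwards [hgc.eventually_lt_const hx0g', hhc.eventually_const_lt hx0h',
        eventually_gt_nhds ht0pos] with s h1 h2 h3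
      exact ⟨h1, h2, h3⟩
    obtain ⟨ε, hε, hball⟩ := Metric.eventually_nhds_iff.1 hev
    obtain ⟨m, hm1, hm2, hm3⟩ : ∃ m, 0 < m ∧ m ≤ ε/2 ∧ m ≤ t0/2 :=
      ⟨min (ε/2) (t0/2), lt_min (by linarith) (by linarith), min_le_left _ _, min_le_right _ _⟩
    set a := t0 - m with hadef
    have haa : a < t0 := by rw [hadef]; linarith
    have hmem : ∀ s ∈ Set.Icc a t0, (x0, s) ∈ R := by
      intro s hs
      have hd1 : dist s t0 < ε := by
        rw [Real.dist_eq, abs_lt]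
        have hs1 := hs.1; have hs2 := hs.2
        rw [hadef] at hs1
        constructor <;> linarith
      obtain ⟨hg1, hg2, hg3⟩ := hball hd1
      exact ⟨⟨hg3.le, hs.2.trans ht02⟩, hg1.le, hg2.le⟩
    have hItd := (hIt t0 ht0pos x0 hx0mem)
    have hexp : HasDerivAt (fun s : ℝ => Real.exp (-s)) (-Real.exp (-t0)) t0 := by
      simpa [Function.comp_def] using (Real.hasDerivAt_exp (-t0)).comp t0 (hasDerivAt_neg t0)
    have hft : HasDerivAt (fun s => Real.exp (-s) * (Nstar - I x0 s))
        (-Real.exp (-t0) * (Nstar - I x0 t0) + Real.exp (-t0) * (-pT I x0 t0)) t0 := by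
      have h1 : HasDerivAt (fun s => Nstar - I x0 s) (-pT I x0 t0) t0 :=
        hItd.hasDerivAt.const_sub Nstar
      exact hexp.mul h1
    have hderle : deriv (fun s => Real.exp (-s) * (Nstar - I x0 s)) t0 ≤ 0 := by
      apply deriv_nonpos_of_min_left haa hft.differentiableAt
      intro s hs
      exact hmin' (x0, s) (hmem s hs)
    rw [hft.deriv] at hderle
    -- from hderle : pT I x0 t0 ≥ (I - Nstar) > 0
    have hpT : pT I x0 t0 ≥ I x0 t0 - Nstar := by
      by_contra hc; push_neg at hc
      nlinarith
    -- PDE contradiction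
    have hpd := hpde t0 ht0pos x0 hx0mem
    have hβv := hβlb x0 t0 ht0pos.le
    have hγv := hγlb x0 t0 ht0pos.le
    rw [hpX0] at hpd
    -- pT = d * pXX + (β-γ)I - (β/N)I², with pXX ≤ 0, I > N
    have hq : 0 < β x0 t0 / Nstar := div_pos (by linarith) hN
    have hkey : (β x0 t0 - γ x0 t0) * I x0 t0 - (β x0 t0 / Nstar) * (I x0 t0)^2 < 0 := by
      have h1 : β x0 t0 / Nstar * Nstar = β x0 t0 := div_mul_cancel₀ _ hN.ne'
      nlinarith [mul_pos hq (mul_pos (lt_trans hN hHv) (sub_pos.2 hHv))]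
    nlinarith
set_option maxHeartbeats 1600000 in
lemma comparison_lower (d α Nstar : ℝ) (β γ : ℝ → ℝ → ℝ)
    (I : ℝ → ℝ → ℝ) (g h : ℝ → ℝ) (t1 : ℝ) (lambda0 : ℝ) (ψ : ℝ → ℝ → ℝ)
    (βbar β2 γ1 δ : ℝ)
    (hd : 0 < d) (hN : 0 < Nstar) (ht1 : 0 ≤ t1) (hlam : lambda0 < 0)
    (hδpos : 0 < δ) (hγ1 : 0 < γ1)
    (hβub : ∀ x t, 0 ≤ t → β x t ≤ β2) (hβpos : ∀ x t, 0 ≤ t → 0 ≤ β x t)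
    (hγlb : ∀ x t, 0 ≤ t → γ1 ≤ γ x t)
    (hβbarle : ∀ x ∈ Set.Icc (g t1) (h t1), ∀ t : ℝ, β x t ≤ βbar)
    (hδβ : δ * βbar ≤ Nstar * (-lambda0))
    (hght1 : g t1 < h t1)
    (hgle : ∀ t ≥ t1, g t ≤ g t1) (hhle : ∀ t ≥ t1, h t1 ≤ h t)
    (hIcont : ContinuousOn (fun p : ℝ × ℝ => I p.1 p.2)
      {p : ℝ × ℝ | 0 ≤ p.2 ∧ g p.2 ≤ p.1 ∧ p.1 ≤ h p.2})
    (hInonneg : ∀ t ≥ (0:ℝ), ∀ x ∈ Set.Icc (g t) (h t), 0 ≤ I x t)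
    (hIx : ∀ t > (0:ℝ), ∀ x ∈ Set.Icc (g t) (h t), DifferentiableAt ℝ (fun y => I y t) x)
    (hIxx : ∀ t > (0:ℝ), ∀ x ∈ Set.Ioo (g t) (h t), DifferentiableAt ℝ (fun y => pX I y t) x)
    (hIt : ∀ t > (0:ℝ), ∀ x ∈ Set.Ioo (g t) (h t), DifferentiableAt ℝ (fun s => I x s) t)
    (hpde : ∀ t > (0:ℝ), ∀ x ∈ Set.Ioo (g t) (h t),
      pT I x t - d * pXX I x t + α * pX I x t
        = (β x t - γ x t) * I x t - (β x t / Nstar) * (I x t) ^ 2)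
    (hψc : ContinuousOn (fun p : ℝ × ℝ => ψ p.1 p.2)
      (Set.Icc (g t1) (h t1) ×ˢ Set.univ))
    (hψdiff : ∀ t : ℝ, ∀ x ∈ Set.Ioo (g t1) (h t1),
      DifferentiableAt ℝ (fun y => ψ y t) x ∧
      DifferentiableAt ℝ (fun y => pX ψ y t) x ∧
      DifferentiableAt ℝ (fun s => ψ x s) t)
    (hψbc : ∀ t : ℝ, ψ (g t1) t = 0 ∧ ψ (h t1) t = 0)
    (hψbd : ∀ t : ℝ, ∀ x ∈ Set.Ioo (g t1) (h t1), 0 < ψ x t ∧ ψ x t ≤ 1)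
    (hψpde : ∀ t : ℝ, ∀ x ∈ Set.Ioo (g t1) (h t1),
      pT ψ x t - d * pXX ψ x t + α * pX ψ x t
        = (β x t - γ x t) * ψ x t + lambda0 * ψ x t)
    (hδinit : ∀ x ∈ Set.Icc (g t1) (h t1), δ * ψ x t1 ≤ I x t1) :
    ∀ t ≥ t1, ∀ x ∈ Set.Icc (g t1) (h t1), δ * ψ x t ≤ I x t := by
  intro t2 ht2 x hx
  set K := β2 + 1 with hKdef
  set Q := Set.Icc (g t1) (h t1) ×ˢ Set.Icc t1 t2 with hQdef
  have hQc : IsCompact Q := isCompact_Icc.prod isCompact_Icc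
  have hQne : Q.Nonempty := ⟨(x, t2), Set.mk_mem_prod hx ⟨ht2, le_refl t2⟩⟩
  have hQsubD : Q ⊆ {p : ℝ × ℝ | 0 ≤ p.2 ∧ g p.2 ≤ p.1 ∧ p.1 ≤ h p.2} := by
    rintro ⟨y, s⟩ ⟨hy, hs⟩
    exact ⟨le_trans ht1 hs.1, le_trans (hgle s hs.1) hy.1, le_trans hy.2 (hhle s hs.1)⟩
  have hQsubψ : Q ⊆ Set.Icc (g t1) (h t1) ×ˢ (Set.univ : Set ℝ) := by
    rintro ⟨y, s⟩ ⟨hy, _⟩; exact ⟨hy, Set.mem_univ _⟩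
  set G : ℝ × ℝ → ℝ := fun p => Real.exp (-K * p.2) * (I p.1 p.2 - δ * ψ p.1 p.2) with hGdef
  have hGc : ContinuousOn G Q := by
    apply ContinuousOn.mul
    · exact (Real.continuous_exp.comp (continuous_const.mul continuous_snd)).continuousOn
    · exact (hIcont.mono hQsubD).sub (continuousOn_const.mul (hψc.mono hQsubψ))
  obtain ⟨p0, hp0Q, hp0min⟩ := hQc.exists_isMinOn hQne hGc
  have hmin : ∀ p ∈ Q, G p0 ≤ G p := fun p hp => hp0min hp
  rcases le_or_gt 0 (G p0) with hsign | hsign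
  · -- nonnegative minimum
    have hx2 : 0 ≤ G (x, t2) := le_trans hsign (hmin (x, t2) (Set.mk_mem_prod hx ⟨ht2, le_refl t2⟩))
    have he := Real.exp_pos (-K * t2)
    by_contra hc; push_neg at hc
    have : G (x, t2) < 0 := mul_neg_of_pos_of_neg he (by simp only []; linarith)
    linarith
  · exfalso
    obtain ⟨x0, t0⟩ := p0
    have hp0' : x0 ∈ Set.Icc (g t1) (h t1) ∧ t0 ∈ Set.Icc t1 t2 := hp0Q
    obtain ⟨⟨hx0g, hx0h⟩, ht10, ht02⟩ := hp0'
    have ht0nn : (0:ℝ) ≤ t0 := le_trans ht1 ht10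
    have he0 := Real.exp_pos (-K * t0)
    have hmin' : ∀ p ∈ Q, Real.exp (-K * t0) * (I x0 t0 - δ * ψ x0 t0) ≤ G p :=
      fun p hp => hmin p hp
    have hHv : I x0 t0 - δ * ψ x0 t0 < 0 := by
      by_contra hc; push_neg at hc
      exact absurd (mul_nonneg he0.le hc) (not_le.2 hsign)
    have hgle0 : g t0 ≤ g t1 := hgle t0 ht10
    have hhle0 : h t1 ≤ h t0 := hhle t0 ht10
    have hIcc0 : x0 ∈ Set.Icc (g t0) (h t0) :=
      ⟨le_trans hgle0 hx0g, le_trans hx0h hhle0⟩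
    -- x0 is interior
    have hx0g' : g t1 < x0 := by
      rcases hx0g.lt_or_eq with hlt | heq
      · exact hlt
      · exfalso
        have h1 : ψ x0 t0 = 0 := by rw [← heq]; exact (hψbc t0).1
        have h2 : 0 ≤ I x0 t0 := hInonneg t0 ht0nn x0 hIcc0
        rw [h1] at hHv; linarith
    have hx0h' : x0 < h t1 := by
      rcases hx0h.lt_or_eq with hlt | heq
      · exact hlt
      · exfalso
        have h1 : ψ x0 t0 = 0 := by rw [heq]; exact (hψbc t0).2
        have h2 : 0 ≤ I x0 t0 := hInonneg t0 ht0nn x0 hIcc0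
        rw [h1] at hHv; linarith
    have hx0mem1 : x0 ∈ Set.Ioo (g t1) (h t1) := ⟨hx0g', hx0h'⟩
    have hx0mem0 : x0 ∈ Set.Ioo (g t0) (h t0) :=
      ⟨lt_of_le_of_lt hgle0 hx0g', lt_of_lt_of_le hx0h' hhle0⟩
    -- t0 > t1
    have ht1t0 : t1 < t0 := by
      rcases ht10.lt_or_eq with hlt | heq
      · exact hlt
      · exfalso; rw [← heq] at hHv
        have := hδinit x0 ⟨hx0g, hx0h⟩; linarith
    have ht0pos : 0 < t0 := lt_of_le_of_lt ht1 ht1t0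
    -- spatial derivatives at the minimum
    have hsd := second_deriv_test (f := fun y => I y t0 - δ * ψ y t0)
      (f' := fun y => pX I y t0 - δ * pX ψ y t0) hx0mem1
      (fun y hy => ((hIx t0 ht0pos y
          ⟨le_trans hgle0 hy.1.le, le_trans hy.2.le hhle0⟩).hasDerivAt).sub
        (((hψdiff t0 y hy).1).hasDerivAt.const_mul δ))
      ((hIxx t0 ht0pos x0 hx0mem0).sub (((hψdiff t0 x0 hx0mem1).2.1).const_mul δ))
      (by
        intro y hy
        have h1 : Real.exp (-K * t0) * (I x0 t0 - δ * ψ x0 t0)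
            ≤ Real.exp (-K * t0) * (I y t0 - δ * ψ y t0) :=
          hmin' (y, t0) ⟨⟨hy.1.le, hy.2.le⟩, ht10, ht02⟩
        exact (mul_le_mul_iff_right₀ he0).1 h1)
    have hA1 : pX I x0 t0 - δ * pX ψ x0 t0 = 0 := hsd.1
    have hA2 : 0 ≤ pXX I x0 t0 - δ * pXX ψ x0 t0 := by
      have h2 := hsd.2
      rw [deriv_fun_sub (hIxx t0 ht0pos x0 hx0mem0)
        (((hψdiff t0 x0 hx0mem1).2.1).const_mul δ),
        deriv_const_mul δ ((hψdiff t0 x0 hx0mem1).2.1)] at h2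
      exact h2
    -- time derivative at the minimum
    have hlin : HasDerivAt (fun s : ℝ => -K * s) (-K) t0 := by
      simpa using (hasDerivAt_id t0).const_mul (-K)
    have hexp : HasDerivAt (fun s : ℝ => Real.exp (-K * s))
        (Real.exp (-K * t0) * (-K)) t0 := by
      simpa [Function.comp_def] using (Real.hasDerivAt_exp (-K * t0)).comp t0 hlin
    have hft : HasDerivAt (fun s => Real.exp (-K * s) * (I x0 s - δ * ψ x0 s))
        (Real.exp (-K * t0) * (-K) * (I x0 t0 - δ * ψ x0 t0)
          + Real.exp (-K * t0) * (pT I x0 t0 - δ * pT ψ x0 t0)) t0 :=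
      hexp.mul (((hIt t0 ht0pos x0 hx0mem0).hasDerivAt).sub
        (((hψdiff t0 x0 hx0mem1).2.2).hasDerivAt.const_mul δ))
    have hderle : deriv (fun s => Real.exp (-K * s) * (I x0 s - δ * ψ x0 s)) t0 ≤ 0 := by
      apply deriv_nonpos_of_min_left ht1t0 hft.differentiableAt
      intro s hs
      exact hmin' (x0, s) ⟨⟨hx0g, hx0h⟩, hs.1, le_trans hs.2 ht02⟩
    rw [hft.deriv] at hderle
    have hEq : Real.exp (-K * t0) * (-K) * (I x0 t0 - δ * ψ x0 t0)
          + Real.exp (-K * t0) * (pT I x0 t0 - δ * pT ψ x0 t0)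
        = Real.exp (-K * t0) * ((pT I x0 t0 - δ * pT ψ x0 t0)
            - K * (I x0 t0 - δ * ψ x0 t0)) := by ring
    rw [hEq] at hderle
    have hA3 : pT I x0 t0 - δ * pT ψ x0 t0 ≤ K * (I x0 t0 - δ * ψ x0 t0) := by
      by_contra hc; push_neg at hc
      have h2 : 0 < Real.exp (-K * t0) * ((pT I x0 t0 - δ * pT ψ x0 t0)
          - K * (I x0 t0 - δ * ψ x0 t0)) := mul_pos he0 (by linarith)
      linarith
    -- PDE combination
    have hpdI := hpde t0 ht0pos x0 hx0mem0
    have hpdψ := hψpde t0 x0 hx0mem1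
    obtain ⟨hψv1, hψv2⟩ := hψbd t0 x0 hx0mem1
    have hIvnn : 0 ≤ I x0 t0 := hInonneg t0 ht0nn x0 hIcc0
    have hβvbar : β x0 t0 ≤ βbar := hβbarle x0 ⟨hx0g, hx0h⟩ t0
    have hβvnn : 0 ≤ β x0 t0 := hβpos x0 t0 ht0nn
    have hβv2 : β x0 t0 ≤ β2 := hβub x0 t0 ht0nn
    have hγv : γ1 ≤ γ x0 t0 := hγlb x0 t0 ht0nn
    set pTI := pT I x0 t0 with hv1
    set pTp := pT ψ x0 t0 with hv2
    set pXI := pX I x0 t0 with hv3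
    set pXp := pX ψ x0 t0 with hv4
    set pXXI := pXX I x0 t0 with hv5
    set pXXp := pXX ψ x0 t0 with hv6
    set Iv := I x0 t0 with hv7
    set pv := ψ x0 t0 with hv8
    set bv := β x0 t0 with hv9
    set gv := γ x0 t0 with hv10
    clear_value K Q G pTI pTp pXI pXp pXXI pXXp Iv pv bv gv
    clear hmin hmin' hGc hp0min hsign hp0Q hQsubD hQsubψ hIcont hψc hft hderle hexp hlin
    clear hsd hpde hψpde hIx hIxx hIt hψdiff hδinit hψbd hψbc hInonneg hβbarle hβub hβpos
    clear hγlb hgle hhle hGdef hQdef hQc hQne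
    have hcomb : pTI - δ * pTp
        = d * (pXXI - δ * pXXp)
          - α * (pXI - δ * pXp)
          + (bv - gv) * (Iv - δ * pv)
          - (bv / Nstar) * Iv ^ 2
          - lambda0 * (δ * pv) := by
      linear_combination hpdI - δ * hpdψ
    have hIvle : Iv ≤ δ * pv := by linarith
    have e1 : Iv ^ 2 ≤ (δ * pv) ^ 2 := pow_le_pow_left₀ hIvnn hIvle 2
    have e2 : (bv / Nstar) * Iv ^ 2 ≤ (βbar / Nstar) * (δ * pv) ^ 2 := by
      have hb : 0 ≤ bv / Nstar := div_nonneg hβvnn hN.le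
      have hb2 : bv / Nstar ≤ βbar / Nstar := by gcongr
      exact mul_le_mul hb2 e1 (sq_nonneg Iv) (div_nonneg (hβvnn.trans hβvbar) hN.le)
    have e3 : (βbar / Nstar) * (δ * pv) ^ 2
        = (δ * βbar / Nstar) * (pv * (δ * pv)) := by ring
    have e4 : δ * βbar / Nstar ≤ -lambda0 := by
      rw [div_le_iff₀ hN]; linarith
    have e5 : (δ * βbar / Nstar) * (pv * (δ * pv))
        ≤ (-lambda0) * (pv * (δ * pv)) :=
      mul_le_mul_of_nonneg_right e4 (by positivity)
    have e6a : pv * (δ * pv) ≤ δ * pv := by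
      have := mul_le_mul_of_nonneg_right hψv2 (le_of_lt (mul_pos hδpos hψv1))
      simpa using this
    have e6 : (-lambda0) * (pv * (δ * pv)) ≤ (-lambda0) * (δ * pv) :=
      mul_le_mul_of_nonneg_left e6a (by linarith)
    have eS : (bv / Nstar) * Iv ^ 2 ≤ (-lambda0) * (δ * pv) := by
      linarith
    -- final contradiction
    have hα0 : α * (pXI - δ * pXp) = 0 := by rw [hA1, mul_zero]
    have hdA2 : 0 ≤ d * (pXXI - δ * pXXp) := mul_nonneg hd.le hA2
    have hbvK : bv - gv < K := by rw [hKdef]; linarith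
    have hKb : K * (Iv - δ * pv) < (bv - gv) * (Iv - δ * pv) :=
      mul_lt_mul_of_neg_right hbvK hHv
    have hS : 0 ≤ -((bv / Nstar) * Iv ^ 2) - lambda0 * (δ * pv) := by
      have hring : (-lambda0) * (δ * pv) = -(lambda0 * (δ * pv)) := by ring
      rw [hring] at eS; linarith
    linarith [hcomb, hA3, hα0, hdA2, hKb, hS]
/-- **Theorem 4.2 (persistence when the principal eigenvalue is negative).** If on the
interval `[g(t1), h(t1)]` there is a positive T-periodic eigenfunction `ψ ≤ 1` with
eigenvalue `λ0 < 0`, and `0 < δ ≤ N*(−λ0)/β̄` with `δψ(·,t1) ≤ I(·,t1)`, then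
`I ≥ δψ` on `[g(t1),h(t1)] × [t1,∞)` and the disease persists. -/
theorem persistence_when_eigenvalue_negative
    (d α μ Nstar h0 T : ℝ) (β γ : ℝ → ℝ → ℝ) (I0 : ℝ → ℝ)
    (hd : 0 < d) (hα : 0 < α) (hμ : 0 < μ) (hN : 0 < Nstar) (hh0 : 0 < h0) (hT : 0 < T)
    (β1 β2 γ1 γ2 : ℝ) (hβ1 : 0 < β1) (hγ1 : 0 < γ1)
    (hβb : ∀ x t, 0 ≤ t → β1 ≤ β x t ∧ β x t ≤ β2)
    (hγb : ∀ x t, 0 ≤ t → γ1 ≤ γ x t ∧ γ x t ≤ γ2)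
    (hper : ∀ x t, β x (t + T) = β x t ∧ γ x (t + T) = γ x t)
    (hI0reg : ContDiffOn ℝ 2 I0 (Set.Icc (-h0) h0))
    (hI0bd : I0 (-h0) = 0 ∧ I0 h0 = 0 ∧ ∀ x ∈ Set.Ioo (-h0) h0, 0 < I0 x ∧ I0 x ≤ Nstar)
    (I : ℝ → ℝ → ℝ) (g h : ℝ → ℝ)
    (hsol : IsFBPSol d α μ Nstar h0 β γ I0 I g h)
    (t1 : ℝ) (ht1 : 0 ≤ t1)
    -- the eigenpair (λ0, ψ) on [g(t1), h(t1)] × ℝ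
    (lambda0 : ℝ) (hlam : lambda0 < 0)
    (ψ : ℝ → ℝ → ℝ)
    (hψper : ∀ x t, ψ x (t + T) = ψ x t)
    (hψc : ContinuousOn (fun p : ℝ × ℝ => ψ p.1 p.2)
      (Set.Icc (g t1) (h t1) ×ˢ Set.univ))
    (hψdiff : ∀ t : ℝ, ∀ x ∈ Set.Ioo (g t1) (h t1),
      DifferentiableAt ℝ (fun y => ψ y t) x ∧
      DifferentiableAt ℝ (fun y => pX ψ y t) x ∧
      DifferentiableAt ℝ (fun s => ψ x s) t)
    (hψtc : ContinuousOn (fun p : ℝ × ℝ => pT ψ p.1 p.2)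
      (Set.Icc (g t1) (h t1) ×ˢ Set.univ))
    (hψxc : ContinuousOn (fun p : ℝ × ℝ => pX ψ p.1 p.2)
      (Set.Icc (g t1) (h t1) ×ˢ Set.univ))
    (hψxxc : ContinuousOn (fun p : ℝ × ℝ => pXX ψ p.1 p.2)
      (Set.Icc (g t1) (h t1) ×ˢ Set.univ))
    (hψbc : ∀ t : ℝ, ψ (g t1) t = 0 ∧ ψ (h t1) t = 0)
    (hψbd : ∀ t : ℝ, ∀ x ∈ Set.Ioo (g t1) (h t1), 0 < ψ x t ∧ ψ x t ≤ 1)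
    (hψpde : ∀ t : ℝ, ∀ x ∈ Set.Ioo (g t1) (h t1),
      pT ψ x t - d * pXX ψ x t + α * pX ψ x t
        = (β x t - γ x t) * ψ x t + lambda0 * ψ x t)
    -- β̄ is the maximum of β on [g(t1),h(t1)] × [0,T]
    (βbar : ℝ)
    (hβbar : IsGreatest
      {v : ℝ | ∃ x ∈ Set.Icc (g t1) (h t1), ∃ s ∈ Set.Icc (0:ℝ) T, v = β x s} βbar)
    (δ : ℝ) (hδpos : 0 < δ) (hδ : δ ≤ Nstar * (-lambda0) / βbar)
    (hδinit : ∀ x ∈ Set.Icc (g t1) (h t1), δ * ψ x t1 ≤ I x t1) :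
    -- I dominates the lower solution for all later times
    (∀ t ≥ t1, ∀ x ∈ Set.Icc (g t1) (h t1), δ * ψ x t ≤ I x t) ∧
    -- persistence of the disease
    Filter.liminf (fun t => sSup ((fun x => I x t) '' Set.Icc (g t1) (h t1)))
        Filter.atTop
      ≥ δ * Filter.liminf (fun t => sSup ((fun x => ψ x t) '' Set.Icc (g t1) (h t1)))
        Filter.atTop ∧
    0 < δ * Filter.liminf (fun t => sSup ((fun x => ψ x t) '' Set.Icc (g t1) (h t1)))
        Filter.atTop := by
  obtain ⟨hg0, hh0, hgh, hgC1, hhC1, hgmono, hhmono, hIcont, hInonneg, hIx, hIxcont,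
    hIxx, hIt, hpde, hIg, hIh, hstefg, hstefh, hinit⟩ := hsol
  have hght1 : g t1 < h t1 := hgh t1 ht1
  -- βbar facts
  have hβbarle : ∀ x ∈ Set.Icc (g t1) (h t1), ∀ t : ℝ, β x t ≤ βbar := by
    intro x hx t
    obtain ⟨s, hs, hseq⟩ := periodic_reduce hT (fun u => (hper x u).1) t
    rw [← hseq]
    exact hβbar.2 ⟨x, hx, s, hs, rfl⟩
  have hβbarpos : 0 < βbar := by
    obtain ⟨xw, hxw, sw, hsw, hval⟩ := hβbar.1
    have := (hβb xw sw hsw.1).1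
    linarith
  have hδβ : δ * βbar ≤ Nstar * (-lambda0) := (le_div_iff₀ hβbarpos).1 hδ
  -- upper bound on I
  have hIleN : ∀ t ≥ (0:ℝ), ∀ x ∈ Set.Icc (g t) (h t), I x t ≤ Nstar := by
    apply I_le_Nstar d α Nstar β γ I g h hd hN β1 γ1 hβ1 hγ1
      (fun x t ht => (hβb x t ht).1) (fun x t ht => (hγb x t ht).1) hgh
      hgC1.continuousOn hhC1.continuousOn hIcont hIx hIxx hIt hpde hIg hIh
    intro x hx
    have hx' : x ∈ Set.Icc (-h0) h0 := by rwa [hg0, hh0] at hx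
    rw [hinit x hx']
    rcases hx'.1.lt_or_eq with h1 | h1
    · rcases hx'.2.lt_or_eq with h2 | h2
      · exact (hI0bd.2.2 x ⟨h1, h2⟩).2
      · rw [h2, hI0bd.2.1]; exact hN.le
    · rw [← h1, hI0bd.1]; exact hN.le
  -- comparison with the lower solution
  have hgle : ∀ t ≥ t1, g t ≤ g t1 := fun t ht => hgmono ht1 (le_trans ht1 ht) ht
  have hhle : ∀ t ≥ t1, h t1 ≤ h t := fun t ht => hhmono ht1 (le_trans ht1 ht) ht
  have hcomp : ∀ t ≥ t1, ∀ x ∈ Set.Icc (g t1) (h t1), δ * ψ x t ≤ I x t :=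
    comparison_lower d α Nstar β γ I g h t1 lambda0 ψ βbar β2 γ1 δ hd hN ht1 hlam hδpos hγ1
      (fun x t ht => (hβb x t ht).2) (fun x t ht => le_trans hβ1.le (hβb x t ht).1)
      (fun x t ht => (hγb x t ht).1) hβbarle hδβ hght1 hgle hhle hIcont hInonneg
      hIx hIxx hIt hpde hψc hψdiff hψbc hψbd hψpde hδinit
  refine ⟨hcomp, ?_⟩
  -- persistence part
  set S := Set.Icc (g t1) (h t1) with hSdef
  have hSne : S.Nonempty := Set.nonempty_Icc.2 hght1.le
  set gψ : ℝ → ℝ := fun t => sSup ((fun x => ψ x t) '' S) with hgψdef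
  set fI : ℝ → ℝ := fun t => sSup ((fun x => I x t) '' S) with hfIdef
  have hψbds : ∀ t : ℝ, ∀ x ∈ S, 0 ≤ ψ x t ∧ ψ x t ≤ 1 := by
    intro t x hx
    rcases hx.1.lt_or_eq with h1 | h1
    · rcases hx.2.lt_or_eq with h2 | h2
      · have := hψbd t x ⟨h1, h2⟩; exact ⟨this.1.le, this.2⟩
      · rw [h2, (hψbc t).2]; exact ⟨le_refl 0, zero_le_one⟩
    · rw [← h1, (hψbc t).1]; exact ⟨le_refl 0, zero_le_one⟩
  have hgψle1 : ∀ t : ℝ, gψ t ≤ 1 := by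
    intro t
    apply csSup_le (hSne.image _)
    rintro v ⟨y, hy, rfl⟩
    exact (hψbds t y hy).2
  have hgψbdd : ∀ t : ℝ, BddAbove ((fun x => ψ x t) '' S) := by
    intro t
    refine ⟨1, ?_⟩
    rintro v ⟨y, hy, rfl⟩
    exact (hψbds t y hy).2
  -- a positive lower bound for gψ via the midpoint
  set xb := (g t1 + h t1) / 2 with hxbdef
  have hxbmem : xb ∈ Set.Ioo (g t1) (h t1) := by
    constructor <;> (rw [hxbdef]; linarith)
  have hxbS : xb ∈ S := ⟨hxbmem.1.le, hxbmem.2.le⟩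
  have hφcont : Continuous (fun t : ℝ => ψ xb t) := by
    rw [← continuousOn_univ]
    exact hψc.comp ((continuous_const.prodMk continuous_id).continuousOn)
      (fun t _ => ⟨hxbS, Set.mem_univ _⟩)
  obtain ⟨tm, htm, htmmin⟩ := isCompact_Icc.exists_isMinOn
    (Set.nonempty_Icc.2 hT.le) hφcont.continuousOn
  set m0 := ψ xb tm with hm0def
  have hm0pos : 0 < m0 := (hψbd tm xb hxbmem).1
  have hφge : ∀ t : ℝ, m0 ≤ ψ xb t := by
    intro t
    obtain ⟨s, hs, hseq⟩ := periodic_reduce hT (fun u => hψper xb u) t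
    rw [← hseq]
    exact htmmin hs
  have hgψge : ∀ t : ℝ, m0 ≤ gψ t := fun t =>
    le_trans (hφge t) (le_csSup (hgψbdd t) ⟨xb, hxbS, rfl⟩)
  -- coboundedness
  have hcobgψ : Filter.IsCoboundedUnder (· ≥ ·) Filter.atTop gψ :=
    (Filter.isBoundedUnder_of ⟨1, hgψle1⟩).isCoboundedUnder_ge
  have hfIleN : ∀ t ≥ t1, fI t ≤ Nstar := by
    intro t ht
    apply csSup_le (hSne.image _)
    rintro v ⟨y, hy, rfl⟩
    exact hIleN t (le_trans ht1 ht) y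
      ⟨le_trans (hgle t ht) hy.1, le_trans hy.2 (hhle t ht)⟩
  have hfIbdd : Filter.IsBoundedUnder (· ≤ ·) Filter.atTop fI :=
    ⟨Nstar, Filter.eventually_map.2
      ((Filter.eventually_ge_atTop t1).mono (fun t ht => hfIleN t ht))⟩
  have hcobfI : Filter.IsCoboundedUnder (· ≥ ·) Filter.atTop fI :=
    hfIbdd.isCoboundedUnder_ge
  have hfIge : ∀ t ≥ t1, δ * gψ t ≤ fI t := by
    intro t ht
    have hψct : ContinuousOn (fun x => ψ x t) S :=
      hψc.comp ((continuous_id.prodMk continuous_const).continuousOn)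
        (fun x hx => ⟨hx, Set.mem_univ _⟩)
    obtain ⟨xs, hxs, hxsmax⟩ := isCompact_Icc.exists_isMaxOn hSne hψct
    have h1 : gψ t ≤ ψ xs t := by
      apply csSup_le (hSne.image _)
      rintro v ⟨y, hy, rfl⟩
      exact hxsmax hy
    have h2 : δ * ψ xs t ≤ I xs t := hcomp t ht xs hxs
    have h3 : I xs t ≤ fI t := by
      apply le_csSup
      · refine ⟨Nstar, ?_⟩
        rintro v ⟨y, hy, rfl⟩
        exact hIleN t (le_trans ht1 ht) y
          ⟨le_trans (hgle t ht) hy.1, le_trans hy.2 (hhle t ht)⟩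
      · exact ⟨xs, hxs, rfl⟩
    have h4 : δ * gψ t ≤ δ * ψ xs t := mul_le_mul_of_nonneg_left h1 hδpos.le
    linarith
  have hLψ : m0 ≤ Filter.liminf gψ Filter.atTop :=
    Filter.le_liminf_of_le hcobgψ (Filter.Eventually.of_forall hgψge)
  constructor
  · -- liminf inequality
    have hkey : ∀ ε > (0:ℝ), δ * Filter.liminf gψ Filter.atTop - ε
        ≤ Filter.liminf fI Filter.atTop := by
      intro ε hε
      have hev1 : ∀ᶠ t in Filter.atTop,
          Filter.liminf gψ Filter.atTop - ε / δ < gψ t :=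
        Filter.eventually_lt_of_lt_liminf (by
          have := div_pos hε hδpos; linarith)
          (Filter.isBoundedUnder_of ⟨m0, fun t => hgψge t⟩)
      have hev : ∀ᶠ t in Filter.atTop, δ * Filter.liminf gψ Filter.atTop - ε ≤ fI t := by
        filter_upwards [hev1, Filter.eventually_ge_atTop t1] with t h1 h2
        have h3 : δ * (Filter.liminf gψ Filter.atTop - ε / δ) ≤ δ * gψ t :=
          mul_le_mul_of_nonneg_left h1.le hδpos.le
        have h4 : δ * (Filter.liminf gψ Filter.atTop - ε / δ)
            = δ * Filter.liminf gψ Filter.atTop - ε := by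
          field_simp
        have h5 := hfIge t h2
        linarith
      exact Filter.le_liminf_of_le hcobfI hev
    by_contra hcon
    push_neg at hcon
    have h6 := hkey ((δ * Filter.liminf gψ Filter.atTop - Filter.liminf fI Filter.atTop) / 2)
      (by linarith)
    linarith
  · exact mul_pos hδpos (lt_of_lt_of_le hm0pos hLψ)
end
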